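/- arXiv:2512.14886 — 3 statements merged into one kernel-verified Lean document; each statement's English description precedes it below -/
import Mathlib

section
/- A signed complete bigraph (a signed bigraph whose underlying graph is a complete bipartite graph) is a chordal signed bigraph if and only if it contains none of the five signed graphs M_1, M_2, M_3, M_4, M_5 as an induced subgraph. -/
universe u

/-! ## Basic unsigned notions for bipartite graphs -/

/-- `G` has an induced cycle of length at least 6 (signs, if any, are arbitrary). -/
def HasLongInducedCycle {V : Type u} (G : SimpleGraph V) : Prop :=
  ∃ n : ℕ, 6 ≤ n ∧ ∃ f : ZMod n → V, Function.Injective f ∧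
    ∀ i j : ZMod n, G.Adj (f i) (f j) ↔ (j = i + 1 ∨ i = j + 1)

/-- A graph is separable if it contains an induced `2K₂`. -/
def IsSeparableGraph {V : Type u} (G : SimpleGraph V) : Prop :=
  ∃ a b c d : V, [a, b, c, d].Pairwise (· ≠ ·) ∧
    G.Adj a b ∧ G.Adj c d ∧ ¬ G.Adj a c ∧ ¬ G.Adj a d ∧ ¬ G.Adj b c ∧ ¬ G.Adj b d

/-- An edge `ab` of a bipartite graph is simplicial if every vertex of `N(a) - {b}`
is adjacent to every vertex of `N(b) - {a}`. -/
def SimplicialEdge {V : Type u} (G : SimpleGraph V) (a b : V) : Prop :=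
  G.Adj a b ∧ ∀ c ∈ G.neighborSet a \ {b}, ∀ d ∈ G.neighborSet b \ {a}, G.Adj c d

/-- A canonical ordering of a bigraph with bipartition given by `side`
(`X` is the `side = true` part, `Y` the `side = false` part): the neighbourhoods of
the `x`'s are decreasing and those of the `y`'s are increasing. -/
def IsCanonicalOrdering {V : Type u} (G : SimpleGraph V) (side : V → Bool)
    {α β : ℕ} (x : Fin α → V) (y : Fin β → V) : Prop :=
  Function.Injective x ∧ Function.Injective y ∧
  (∀ w : V, side w = true ↔ w ∈ Set.range x) ∧
  (∀ w : V, side w = false ↔ w ∈ Set.range y) ∧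
  (∀ i j : Fin α, i ≤ j → G.neighborSet (x j) ⊆ G.neighborSet (x i)) ∧
  (∀ i j : Fin β, i ≤ j → G.neighborSet (y i) ⊆ G.neighborSet (y j))

/-- `H` is a non-trivial (i.e. containing at least one edge) connected component
of `G - S`. -/
def IsNontrivialComponentOf {V : Type u} (G : SimpleGraph V) (S H : Set V) : Prop :=
  H ⊆ Sᶜ ∧ (G.induce H).Connected ∧
  (∀ a ∈ H, ∀ b ∈ Sᶜ, G.Adj a b → b ∈ H) ∧
  (∃ a ∈ H, ∃ b ∈ H, G.Adj a b)

/-- `S` minimally separates the non-trivial components `H` and `H'` of `G - S`: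
every vertex of `S` has a neighbour in `H` and a neighbour in `H'`. -/
def MinimallySeparates {V : Type u} (G : SimpleGraph V) (S H H' : Set V) : Prop :=
  IsNontrivialComponentOf G S H ∧ IsNontrivialComponentOf G S H' ∧ H ≠ H' ∧
  ∀ s ∈ S, (∃ a ∈ H, G.Adj s a) ∧ (∃ a ∈ H', G.Adj s a)

/-! ## Signed bigraphs -/

/-- A signed bigraph: a bipartite graph (with bipartition recorded by `side`)
whose edges carry a sign (`true` = positive, `false` = negative). -/
structure SignedBigraph (V : Type u) where
  graph : SimpleGraph V
  sign : V → V → Bool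
  sign_symm : ∀ a b : V, sign a b = sign b a
  side : V → Bool
  bipartite : ∀ ⦃a b : V⦄, graph.Adj a b → side a ≠ side b

namespace SignedBigraph

variable {V : Type u}

def Adj (G : SignedBigraph V) (a b : V) : Prop := G.graph.Adj a b

/-- `N(ab) = (N(a) ∪ N(b)) - {a, b}`. -/
def edgeNbhd (G : SignedBigraph V) (a b : V) : Set V :=
  (G.graph.neighborSet a ∪ G.graph.neighborSet b) \ {a, b}

/-- The edge `ab` is signed simplicial: `N(ab)` induces a positive biclique. -/
def SignedSimplicial (G : SignedBigraph V) (a b : V) : Prop :=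
  G.Adj a b ∧
    ∀ c ∈ G.edgeNbhd a b, ∀ d ∈ G.edgeNbhd a b,
      G.side c ≠ G.side d → (G.Adj c d ∧ G.sign c d = true)

/-- Delete a set of edges from a signed bigraph (keeping all vertices). -/
def deleteEdges (G : SignedBigraph V) (s : Set (Sym2 V)) : SignedBigraph V where
  graph := G.graph.deleteEdges s
  sign := G.sign
  sign_symm := G.sign_symm
  side := G.side
  bipartite := by
    intro a b h
    exact G.bipartite (SimpleGraph.deleteEdges_adj.mp h).1

/-- The induced signed subgraph on a set of vertices. -/
def induce (G : SignedBigraph V) (A : Set V) : SignedBigraph A where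
  graph := G.graph.induce A
  sign a b := G.sign a b
  sign_symm a b := G.sign_symm a b
  side a := G.side a
  bipartite := by
    intro a b h
    exact G.bipartite h

/-- A chordal signed bigraph: the edges can be ordered `e₁, …, e_m` so that each `eᵢ`
is a signed simplicial edge of the signed bigraph obtained by deleting `e₁, …, e_{i-1}`. -/
def IsChordal (G : SignedBigraph V) : Prop :=
  ∃ l : List (Sym2 V), l.Nodup ∧ (∀ e, e ∈ G.graph.edgeSet ↔ e ∈ l) ∧
    ∀ (i : ℕ) (h : i < l.length), ∃ a b : V,
      l.get ⟨i, h⟩ = s(a, b) ∧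
      (G.deleteEdges {e | e ∈ l.take i}).SignedSimplicial a b

/-! ## Forbidden patterns F₁ – F₆, D, long cycles -/

/-- `G` contains the all-negative 4-cycle `F₁` as an induced subgraph. -/
def HasF1 (G : SignedBigraph V) : Prop :=
  ∃ u1 u2 v1 v2 : V,
    [u1, u2, v1, v2].Pairwise (· ≠ ·) ∧
    G.Adj u1 v1 ∧ G.Adj u1 v2 ∧ G.Adj u2 v1 ∧ G.Adj u2 v2 ∧
    ¬ G.Adj u1 u2 ∧ ¬ G.Adj v1 v2 ∧
    G.sign u1 v1 = false ∧ G.sign u1 v2 = false ∧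
    G.sign u2 v1 = false ∧ G.sign u2 v2 = false

/-- `G` contains a member of `F₂` (a signed `K_{2,3}`) as an induced subgraph. -/
def HasF2 (G : SignedBigraph V) : Prop :=
  ∃ u1 u2 v1 v2 v3 : V,
    [u1, u2, v1, v2, v3].Pairwise (· ≠ ·) ∧
    G.Adj u1 v1 ∧ G.Adj u1 v2 ∧ G.Adj u1 v3 ∧
    G.Adj u2 v1 ∧ G.Adj u2 v2 ∧ G.Adj u2 v3 ∧
    ¬ G.Adj u1 u2 ∧ ¬ G.Adj v1 v2 ∧ ¬ G.Adj v1 v3 ∧ ¬ G.Adj v2 v3 ∧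
    G.sign u1 v1 = false ∧ G.sign u1 v2 = false ∧
    G.sign u2 v2 = false ∧ G.sign u2 v3 = false

/-- `G` contains a member of `F₃` (a signed `K_{2,4}`) as an induced subgraph. -/
def HasF3 (G : SignedBigraph V) : Prop :=
  ∃ u1 u2 v1 v2 v3 v4 : V,
    [u1, u2, v1, v2, v3, v4].Pairwise (· ≠ ·) ∧
    G.Adj u1 v1 ∧ G.Adj u1 v2 ∧ G.Adj u1 v3 ∧ G.Adj u1 v4 ∧
    G.Adj u2 v1 ∧ G.Adj u2 v2 ∧ G.Adj u2 v3 ∧ G.Adj u2 v4 ∧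
    ¬ G.Adj u1 u2 ∧ ¬ G.Adj v1 v2 ∧ ¬ G.Adj v1 v3 ∧ ¬ G.Adj v1 v4 ∧
    ¬ G.Adj v2 v3 ∧ ¬ G.Adj v2 v4 ∧ ¬ G.Adj v3 v4 ∧
    G.sign u1 v1 = false ∧ G.sign u1 v2 = false ∧
    G.sign u2 v3 = false ∧ G.sign u2 v4 = false

/-- `G` contains a member of `F₄` (a signed `K_{3,3}` with negative perfect matching)
as an induced subgraph. -/
def HasF4 (G : SignedBigraph V) : Prop :=
  ∃ u1 u2 u3 v1 v2 v3 : V,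
    [u1, u2, u3, v1, v2, v3].Pairwise (· ≠ ·) ∧
    G.Adj u1 v1 ∧ G.Adj u1 v2 ∧ G.Adj u1 v3 ∧
    G.Adj u2 v1 ∧ G.Adj u2 v2 ∧ G.Adj u2 v3 ∧
    G.Adj u3 v1 ∧ G.Adj u3 v2 ∧ G.Adj u3 v3 ∧
    ¬ G.Adj u1 u2 ∧ ¬ G.Adj u1 u3 ∧ ¬ G.Adj u2 u3 ∧
    ¬ G.Adj v1 v2 ∧ ¬ G.Adj v1 v3 ∧ ¬ G.Adj v2 v3 ∧
    G.sign u1 v1 = false ∧ G.sign u2 v2 = false ∧ G.sign u3 v3 = false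

/-- `G` contains a member of `F₅` as an induced subgraph. -/
def HasF5 (G : SignedBigraph V) : Prop :=
  ∃ x1 x2 x3 y1 y2 y3 : V,
    [x1, x2, x3, y1, y2, y3].Pairwise (· ≠ ·) ∧
    G.Adj x1 y1 ∧ G.Adj x1 y2 ∧ ¬ G.Adj x1 y3 ∧
    G.Adj x2 y1 ∧ G.Adj x2 y2 ∧ G.Adj x2 y3 ∧
    G.Adj x3 y1 ∧ G.Adj x3 y2 ∧ G.Adj x3 y3 ∧
    ¬ G.Adj x1 x2 ∧ ¬ G.Adj x1 x3 ∧ ¬ G.Adj x2 x3 ∧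
    ¬ G.Adj y1 y2 ∧ ¬ G.Adj y1 y3 ∧ ¬ G.Adj y2 y3 ∧
    G.sign x2 y1 = false ∧ G.sign x3 y2 = false

/-- `G` contains a member of `F₆` as an induced subgraph. -/
def HasF6 (G : SignedBigraph V) : Prop :=
  ∃ x1 x2 x3 x4 y1 y2 y3 y4 : V,
    [x1, x2, x3, x4, y1, y2, y3, y4].Pairwise (· ≠ ·) ∧
    G.Adj x1 y1 ∧ G.Adj x1 y2 ∧ ¬ G.Adj x1 y3 ∧ ¬ G.Adj x1 y4 ∧
    G.Adj x2 y1 ∧ G.Adj x2 y2 ∧ ¬ G.Adj x2 y3 ∧ ¬ G.Adj x2 y4 ∧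
    G.Adj x3 y1 ∧ G.Adj x3 y2 ∧ G.Adj x3 y3 ∧ G.Adj x3 y4 ∧
    G.Adj x4 y1 ∧ G.Adj x4 y2 ∧ G.Adj x4 y3 ∧ G.Adj x4 y4 ∧
    ¬ G.Adj x1 x2 ∧ ¬ G.Adj x1 x3 ∧ ¬ G.Adj x1 x4 ∧
    ¬ G.Adj x2 x3 ∧ ¬ G.Adj x2 x4 ∧ ¬ G.Adj x3 x4 ∧
    ¬ G.Adj y1 y2 ∧ ¬ G.Adj y1 y3 ∧ ¬ G.Adj y1 y4 ∧
    ¬ G.Adj y2 y3 ∧ ¬ G.Adj y2 y4 ∧ ¬ G.Adj y3 y4 ∧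
    G.sign x1 y1 = false ∧ G.sign x2 y1 = false ∧ G.sign x3 y2 = false ∧
    G.sign x4 y3 = false ∧ G.sign x4 y4 = false

/-- `G` contains a member of `D` (a 6-cycle `x₁y₁x₂y₃x₃y₂x₁` plus a negative chord
`x₂y₂`) as an induced subgraph. -/
def HasD (G : SignedBigraph V) : Prop :=
  ∃ x1 x2 x3 y1 y2 y3 : V,
    [x1, x2, x3, y1, y2, y3].Pairwise (· ≠ ·) ∧
    G.Adj x1 y1 ∧ G.Adj y1 x2 ∧ G.Adj x2 y3 ∧ G.Adj y3 x3 ∧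
    G.Adj x3 y2 ∧ G.Adj y2 x1 ∧
    G.Adj x2 y2 ∧ G.sign x2 y2 = false ∧
    ¬ G.Adj x1 y3 ∧ ¬ G.Adj x3 y1 ∧
    ¬ G.Adj x1 x2 ∧ ¬ G.Adj x1 x3 ∧ ¬ G.Adj x2 x3 ∧
    ¬ G.Adj y1 y2 ∧ ¬ G.Adj y1 y3 ∧ ¬ G.Adj y2 y3

/-- `G` contains an induced signed cycle of length at least 6. -/
def HasLongCycle (G : SignedBigraph V) : Prop :=
  HasLongInducedCycle G.graph

/-! ## Minimal forbidden patterns M₁ – M₅ for complete bigraphs -/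

def HasM1 (G : SignedBigraph V) : Prop := G.HasF1

def HasM2 (G : SignedBigraph V) : Prop :=
  ∃ u1 u2 v1 v2 v3 : V,
    [u1, u2, v1, v2, v3].Pairwise (· ≠ ·) ∧
    G.Adj u1 v1 ∧ G.Adj u1 v2 ∧ G.Adj u1 v3 ∧
    G.Adj u2 v1 ∧ G.Adj u2 v2 ∧ G.Adj u2 v3 ∧
    ¬ G.Adj u1 u2 ∧ ¬ G.Adj v1 v2 ∧ ¬ G.Adj v1 v3 ∧ ¬ G.Adj v2 v3 ∧
    G.sign u1 v1 = false ∧ G.sign u1 v2 = false ∧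
    G.sign u2 v2 = false ∧ G.sign u2 v3 = false ∧
    G.sign u1 v3 = true ∧ G.sign u2 v1 = true

def HasM3 (G : SignedBigraph V) : Prop :=
  ∃ u1 u2 v1 v2 v3 v4 : V,
    [u1, u2, v1, v2, v3, v4].Pairwise (· ≠ ·) ∧
    G.Adj u1 v1 ∧ G.Adj u1 v2 ∧ G.Adj u1 v3 ∧ G.Adj u1 v4 ∧
    G.Adj u2 v1 ∧ G.Adj u2 v2 ∧ G.Adj u2 v3 ∧ G.Adj u2 v4 ∧
    ¬ G.Adj u1 u2 ∧ ¬ G.Adj v1 v2 ∧ ¬ G.Adj v1 v3 ∧ ¬ G.Adj v1 v4 ∧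
    ¬ G.Adj v2 v3 ∧ ¬ G.Adj v2 v4 ∧ ¬ G.Adj v3 v4 ∧
    G.sign u1 v1 = false ∧ G.sign u1 v2 = false ∧
    G.sign u2 v3 = false ∧ G.sign u2 v4 = false ∧
    G.sign u1 v3 = true ∧ G.sign u1 v4 = true ∧
    G.sign u2 v1 = true ∧ G.sign u2 v2 = true

def HasM4 (G : SignedBigraph V) : Prop :=
  ∃ u1 u2 u3 v1 v2 v3 : V,
    [u1, u2, u3, v1, v2, v3].Pairwise (· ≠ ·) ∧
    G.Adj u1 v1 ∧ G.Adj u1 v2 ∧ G.Adj u1 v3 ∧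
    G.Adj u2 v1 ∧ G.Adj u2 v2 ∧ G.Adj u2 v3 ∧
    G.Adj u3 v1 ∧ G.Adj u3 v2 ∧ G.Adj u3 v3 ∧
    ¬ G.Adj u1 u2 ∧ ¬ G.Adj u1 u3 ∧ ¬ G.Adj u2 u3 ∧
    ¬ G.Adj v1 v2 ∧ ¬ G.Adj v1 v3 ∧ ¬ G.Adj v2 v3 ∧
    G.sign u1 v1 = false ∧ G.sign u2 v2 = false ∧ G.sign u3 v3 = false ∧
    G.sign u1 v2 = true ∧ G.sign u1 v3 = true ∧ G.sign u2 v1 = true ∧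
    G.sign u2 v3 = true ∧ G.sign u3 v1 = true ∧ G.sign u3 v2 = true

def HasM5 (G : SignedBigraph V) : Prop :=
  ∃ x1 x2 x3 y1 y2 y3 : V,
    [x1, x2, x3, y1, y2, y3].Pairwise (· ≠ ·) ∧
    G.Adj x1 y1 ∧ G.Adj x1 y2 ∧ G.Adj x1 y3 ∧
    G.Adj x2 y1 ∧ G.Adj x2 y2 ∧ G.Adj x2 y3 ∧
    G.Adj x3 y1 ∧ G.Adj x3 y2 ∧ G.Adj x3 y3 ∧
    ¬ G.Adj x1 x2 ∧ ¬ G.Adj x1 x3 ∧ ¬ G.Adj x2 x3 ∧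
    ¬ G.Adj y1 y2 ∧ ¬ G.Adj y1 y3 ∧ ¬ G.Adj y2 y3 ∧
    G.sign x1 y1 = false ∧ G.sign x1 y2 = false ∧
    G.sign x2 y2 = false ∧ G.sign x3 y3 = false ∧
    G.sign x1 y3 = true ∧ G.sign x2 y1 = true ∧ G.sign x2 y3 = true ∧
    G.sign x3 y1 = true ∧ G.sign x3 y2 = true

/-! ## The patterns W₁ – W₆ (relativized to an ambient vertex set `A`, with the
distinguished vertices being exactly the vertices in `S`). -/

def HasW1In (G : SignedBigraph V) (A S : Set V) : Prop :=
  ∃ u y x z : V, u ∈ A ∧ y ∈ A ∧ x ∈ A ∧ z ∈ A ∧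
    [u, y, x, z].Pairwise (· ≠ ·) ∧
    G.Adj u y ∧ G.Adj u z ∧ G.Adj x y ∧ G.Adj x z ∧
    ¬ G.Adj u x ∧ ¬ G.Adj y z ∧
    G.sign x y = false ∧ G.sign x z = false ∧
    x ∈ S ∧ u ∉ S ∧ y ∉ S ∧ z ∉ S

def HasW2In (G : SignedBigraph V) (A S : Set V) : Prop :=
  ∃ u y v z p : V, u ∈ A ∧ y ∈ A ∧ v ∈ A ∧ z ∈ A ∧ p ∈ A ∧
    [u, y, v, z, p].Pairwise (· ≠ ·) ∧
    G.Adj u y ∧ G.Adj u z ∧ G.Adj v y ∧ G.Adj v z ∧ G.Adj p v ∧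
    ¬ G.Adj u v ∧ ¬ G.Adj y z ∧ ¬ G.Adj p u ∧ ¬ G.Adj p y ∧ ¬ G.Adj p z ∧
    G.sign v y = false ∧ G.sign v z = false ∧
    p ∈ S ∧ u ∉ S ∧ y ∉ S ∧ v ∉ S ∧ z ∉ S

def HasW3In (G : SignedBigraph V) (A S : Set V) : Prop :=
  ∃ u y v z p : V, u ∈ A ∧ y ∈ A ∧ v ∈ A ∧ z ∈ A ∧ p ∈ A ∧
    [u, y, v, z, p].Pairwise (· ≠ ·) ∧
    G.Adj u y ∧ G.Adj u z ∧ G.Adj v y ∧ G.Adj v z ∧ G.Adj p v ∧ G.Adj p u ∧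
    ¬ G.Adj u v ∧ ¬ G.Adj y z ∧ ¬ G.Adj p y ∧ ¬ G.Adj p z ∧
    G.sign v y = false ∧ G.sign v z = false ∧ G.sign p u = false ∧
    p ∈ S ∧ u ∉ S ∧ y ∉ S ∧ v ∉ S ∧ z ∉ S

def HasW4In (G : SignedBigraph V) (A S : Set V) : Prop :=
  ∃ u y c z p q : V, u ∈ A ∧ y ∈ A ∧ c ∈ A ∧ z ∈ A ∧ p ∈ A ∧ q ∈ A ∧
    [u, y, c, z, p, q].Pairwise (· ≠ ·) ∧
    G.Adj u y ∧ G.Adj u z ∧ G.Adj c y ∧ G.Adj c z ∧ G.Adj p c ∧ G.Adj p u ∧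
    G.Adj q p ∧
    ¬ G.Adj u c ∧ ¬ G.Adj y z ∧ ¬ G.Adj p y ∧ ¬ G.Adj p z ∧
    ¬ G.Adj q u ∧ ¬ G.Adj q y ∧ ¬ G.Adj q c ∧ ¬ G.Adj q z ∧
    G.sign c y = false ∧ G.sign c z = false ∧ G.sign p u = false ∧
    q ∈ S ∧ u ∉ S ∧ y ∉ S ∧ c ∉ S ∧ z ∉ S ∧ p ∉ S

def HasW5In (G : SignedBigraph V) (A S : Set V) : Prop :=
  ∃ u y v z x : V, u ∈ A ∧ y ∈ A ∧ v ∈ A ∧ z ∈ A ∧ x ∈ A ∧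
    [u, y, v, z, x].Pairwise (· ≠ ·) ∧
    G.Adj u y ∧ G.Adj u z ∧ G.Adj v y ∧ G.Adj v z ∧ G.Adj x v ∧ G.Adj x u ∧
    ¬ G.Adj u v ∧ ¬ G.Adj y z ∧ ¬ G.Adj x y ∧ ¬ G.Adj x z ∧
    G.sign v y = false ∧ G.sign x u = false ∧
    x ∈ S ∧ y ∈ S ∧ u ∉ S ∧ v ∉ S ∧ z ∉ S

def HasW6In (G : SignedBigraph V) (A S : Set V) : Prop :=
  ∃ u y v z x : V, u ∈ A ∧ y ∈ A ∧ v ∈ A ∧ z ∈ A ∧ x ∈ A ∧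
    [u, y, v, z, x].Pairwise (· ≠ ·) ∧
    G.Adj u y ∧ G.Adj u z ∧ G.Adj v y ∧ G.Adj v z ∧ G.Adj x v ∧
    ¬ G.Adj u v ∧ ¬ G.Adj y z ∧ ¬ G.Adj x u ∧ ¬ G.Adj x y ∧ ¬ G.Adj x z ∧
    G.sign v y = false ∧
    x ∈ S ∧ y ∈ S ∧ u ∉ S ∧ v ∉ S ∧ z ∉ S

/-! ## Tadpoles, sums and joins -/

/-- The vertex set of a tadpole with heads `w, y, z` and path vertices `x`. -/
def tadVerts {n : ℕ} (w y z : V) (x : Fin n → V) : Set V :=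
  {w, y, z} ∪ Set.range x

/-- The data `(w, y, z, x)` forms an induced tadpole in `G`:
`w, y, z, x ⟨k⟩` induce a 4-cycle whose edges `x ⟨k⟩ y` and `x ⟨k⟩ z` are negative,
together with the induced path `x ⟨k⟩, x ⟨k-1⟩, …, x 0`; the vertex `x 0` is the end
and `w, y, z` are the heads.  If `t2 = true` the tadpole is of type 2: there is
additionally a negative edge from `w` to `x ⟨k-1⟩`.
(The paper's parameter `k ≥ 1` corresponds to `k + 1` here.) -/
structure IsInducedTadpole (G : SignedBigraph V) (k : ℕ) (t2 : Bool)
    (w y z : V) (x : Fin (k + 1) → V) : Prop where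
  t2_len : t2 = true → 1 ≤ k
  inj : Function.Injective x
  w_notmem : ∀ i, w ≠ x i
  y_notmem : ∀ i, y ≠ x i
  z_notmem : ∀ i, z ≠ x i
  wy : w ≠ y
  wz : w ≠ z
  yz : y ≠ z
  adj_wy : G.Adj w y
  adj_wz : G.Adj w z
  not_adj_yz : ¬ G.Adj y z
  adj_path : ∀ i j : Fin (k + 1), G.Adj (x i) (x j) ↔ (i.1 + 1 = j.1 ∨ j.1 + 1 = i.1)
  adj_y : ∀ i : Fin (k + 1), G.Adj y (x i) ↔ i.1 = k
  adj_z : ∀ i : Fin (k + 1), G.Adj z (x i) ↔ i.1 = k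
  adj_w : ∀ i : Fin (k + 1), G.Adj w (x i) ↔ (t2 = true ∧ i.1 + 1 = k)
  sign_y : ∀ i : Fin (k + 1), i.1 = k → G.sign (x i) y = false
  sign_z : ∀ i : Fin (k + 1), i.1 = k → G.sign (x i) z = false
  sign_w : ∀ i : Fin (k + 1), t2 = true → i.1 + 1 = k → G.sign w (x i) = false

/-- `G` contains a sum of two tadpoles (identified at their ends) as an induced
subgraph. -/
def HasTadpoleSum (G : SignedBigraph V) : Prop :=
  ∃ (k k' : ℕ) (t t' : Bool) (w y z w' y' z' : V)
    (x : Fin (k + 1) → V) (x' : Fin (k' + 1) → V),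
    G.IsInducedTadpole k t w y z x ∧ G.IsInducedTadpole k' t' w' y' z' x' ∧
    x 0 = x' 0 ∧
    tadVerts w y z x ∩ tadVerts w' y' z' x' = {x 0} ∧
    ∀ a ∈ tadVerts w y z x, ∀ b ∈ tadVerts w' y' z' x',
      a ≠ x 0 → b ≠ x' 0 → ¬ G.Adj a b

/-- `G` contains a join of two tadpoles as an induced subgraph: two disjoint induced
tadpoles such that the edges between them are exactly those joining the end of each
tadpole to all vertices of the other tadpole in the opposite partite set; all these
edges are positive, except that the edge from an end to the head `w` of the other
tadpole may be of either sign when that tadpole is a member of `W₁` (i.e. has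
`k = 0` and is of type 1), in which case the ends are required to be adjacent. -/
def HasTadpoleJoin (G : SignedBigraph V) : Prop :=
  ∃ (k k' : ℕ) (t t' : Bool) (w y z w' y' z' : V)
    (x : Fin (k + 1) → V) (x' : Fin (k' + 1) → V),
    G.IsInducedTadpole k t w y z x ∧ G.IsInducedTadpole k' t' w' y' z' x' ∧
    Disjoint (tadVerts w y z x) (tadVerts w' y' z' x') ∧
    (∀ a ∈ tadVerts w y z x, ∀ b ∈ tadVerts w' y' z' x',
      (G.Adj a b ↔ ((a = x 0 ∨ b = x' 0) ∧ G.side a ≠ G.side b))) ∧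
    ((k = 0 ∧ t = false) ∨ (k' = 0 ∧ t' = false) → G.side (x 0) ≠ G.side (x' 0)) ∧
    (∀ a ∈ tadVerts w y z x, ∀ b ∈ tadVerts w' y' z' x', G.Adj a b →
      ¬ (a = x 0 ∧ b = w' ∧ k' = 0 ∧ t' = false) →
      ¬ (a = w ∧ b = x' 0 ∧ k = 0 ∧ t = false) →
      G.sign a b = true)

/-- `G` contains a member of
`ℱ = F₁ ∪ F₂ ∪ F₃ ∪ F₄ ∪ F₅ ∪ F₆ ∪ 𝒞 ∪ D ∪ 𝒮 ∪ 𝒥` as an induced subgraph. -/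
def HasForbidden (G : SignedBigraph V) : Prop :=
  G.HasF1 ∨ G.HasF2 ∨ G.HasF3 ∨ G.HasF4 ∨ G.HasF5 ∨ G.HasF6 ∨
  G.HasLongCycle ∨ G.HasD ∨ G.HasTadpoleSum ∨ G.HasTadpoleJoin

/-- `G` is `ℱ`-free. -/
def FFree (G : SignedBigraph V) : Prop := ¬ G.HasForbidden

end SignedBigraph

/-! ## Concrete complete signed bipartite graphs (for the graphs M₁ – M₅) -/

/-- The complete bipartite graph on `Fin a ⊕ Fin b`. -/
def cbsGraph (a b : ℕ) : SimpleGraph (Fin a ⊕ Fin b) where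
  Adj u v := u.isLeft ≠ v.isLeft
  symm := ⟨fun _ _ h => Ne.symm h⟩
  loopless := ⟨fun _ h => h rfl⟩

def cbsSign {a b : ℕ} (sgn : Fin a → Fin b → Bool) :
    Fin a ⊕ Fin b → Fin a ⊕ Fin b → Bool
  | Sum.inl i, Sum.inr j => sgn i j
  | Sum.inr j, Sum.inl i => sgn i j
  | _, _ => true

/-- The complete signed bipartite graph with parts `Fin a`, `Fin b`, and signs given
by `sgn`. -/
def completeSignedBigraph (a b : ℕ) (sgn : Fin a → Fin b → Bool) :
    SignedBigraph (Fin a ⊕ Fin b) where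
  graph := cbsGraph a b
  sign := cbsSign sgn
  sign_symm := by
    intro u v
    cases u <;> cases v <;> rfl
  side := Sum.isLeft
  bipartite := fun _ _ h => h

/-- `M₁`: the all-negative 4-cycle. -/
def Mgraph1 : SignedBigraph (Fin 2 ⊕ Fin 2) :=
  completeSignedBigraph 2 2 (fun _ _ => false)

/-- `M₂`. -/
def Mgraph2 : SignedBigraph (Fin 2 ⊕ Fin 3) :=
  completeSignedBigraph 2 3
    (fun i j => ! decide ((i = 0 ∧ (j = 0 ∨ j = 1)) ∨ (i = 1 ∧ (j = 1 ∨ j = 2))))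

/-- `M₃`. -/
def Mgraph3 : SignedBigraph (Fin 2 ⊕ Fin 4) :=
  completeSignedBigraph 2 4
    (fun i j => ! decide ((i = 0 ∧ (j = 0 ∨ j = 1)) ∨ (i = 1 ∧ (j = 2 ∨ j = 3))))

/-- `M₄`. -/
def Mgraph4 : SignedBigraph (Fin 3 ⊕ Fin 3) :=
  completeSignedBigraph 3 3 (fun i j => ! decide ((i : ℕ) = (j : ℕ)))

/-- `M₅`. -/
def Mgraph5 : SignedBigraph (Fin 3 ⊕ Fin 3) :=
  completeSignedBigraph 3 3
    (fun i j => ! decide ((i = 0 ∧ (j = 0 ∨ j = 1)) ∨ (i = 1 ∧ j = 1) ∨ (i = 2 ∧ j = 2)))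
open SignedBigraph

variable {V : Type u}

namespace SBAux

lemma mem_take_iff {α : Type*} (l : List α) (n : ℕ) (a : α) :
    a ∈ l.take n ↔ ∃ i, i < n ∧ ∃ h : i < l.length, l[i] = a := by
  rw [List.mem_iff_getElem]
  constructor
  · rintro ⟨i, hi, hget⟩
    have hl : i < l.length := lt_of_lt_of_le hi (by simp [List.length_take])
    exact ⟨i, by simp [List.length_take] at hi; omega, hl, by rw [← List.getElem_take (h := hi)]; exact hget⟩
  · rintro ⟨i, hin, hl, hget⟩
    exact ⟨i, by simp [List.length_take]; omega, by rw [List.getElem_take]; exact hget⟩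

variable (G : SignedBigraph V)

lemma adj_ne {a b : V} (h : G.side a ≠ G.side b) : a ≠ b := fun e => h (e ▸ rfl)

lemma not_adj_same {a b : V} (h : G.side a = G.side b) : ¬ G.Adj a b :=
  fun hadj => G.bipartite hadj h

lemma edgeNbhd_comm (a b : V) : G.edgeNbhd a b = G.edgeNbhd b a := by
  unfold SignedBigraph.edgeNbhd
  rw [Set.union_comm]
  congr 1
  ext x; simp [or_comm]

lemma simplicial_symm {a b : V} (h : G.SignedSimplicial a b) : G.SignedSimplicial b a := by
  obtain ⟨hadj, h2⟩ := h
  exact ⟨hadj.symm, by rw [edgeNbhd_comm]; exact h2⟩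

/-- Core lemma for the easy direction: if `A` is a set of vertices containing an
edge such that every edge inside `A` has a negative edge inside `A` avoiding it,
then `G` is not chordal. -/
lemma not_chordal_of_bad (hcomp : ∀ a b : V, G.side a ≠ G.side b → G.Adj a b)
    (A : Set V) (hedge : ∃ a b, a ∈ A ∧ b ∈ A ∧ G.Adj a b)
    (hbad : ∀ a b, a ∈ A → b ∈ A → G.Adj a b →
      ∃ c d, c ∈ A ∧ d ∈ A ∧ c ≠ a ∧ c ≠ b ∧ d ≠ a ∧ d ≠ b ∧
        G.Adj c d ∧ G.sign c d = false) :
    ¬ G.IsChordal := by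
  classical
  rintro ⟨l, -, hmem, hstep⟩
  -- pattern edges
  set P : Sym2 V → Prop := fun e => ∃ a b, e = s(a,b) ∧ a ∈ A ∧ b ∈ A ∧ G.Adj a b with hP
  obtain ⟨a0, b0, ha0, hb0, hadj0⟩ := hedge
  have h0 : s(a0,b0) ∈ l := (hmem _).mp hadj0
  obtain ⟨i0, hi0len, hi0get⟩ := List.mem_iff_getElem.mp h0
  have hex : ∃ i, ∃ h : i < l.length, P l[i] := ⟨i0, hi0len, a0, b0, hi0get, ha0, hb0, hadj0⟩
  -- minimal index of a pattern edge
  obtain ⟨i, ⟨hilen, hiP⟩, hmin⟩ := Nat.lt_wfRel.wf.has_min {i | ∃ h : i < l.length, P l[i]}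
    (by obtain ⟨i, h1, h2⟩ := hex; exact ⟨i, h1, h2⟩)
  obtain ⟨a, b, hab_eq, haA, hbA, hab⟩ := hiP
  -- pattern edges are not deleted yet
  have hnotdel : ∀ e, P e → e ∉ {e | e ∈ l.take i} := by
    rintro e ⟨c, d, rfl, hc, hd, hcd⟩ hmem'
    obtain ⟨j, hj, hjlen, hjget⟩ := (mem_take_iff l i _).mp hmem'
    exact absurd hj (by
      have := hmin j ⟨hjlen, c, d, hjget, hc, hd, hcd⟩
      exact this)
  obtain ⟨a', b', heq, hsimp⟩ := hstep i hilen
  rw [List.get_eq_getElem] at heq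
  rw [heq] at hab_eq
  -- align a',b' with a,b
  have : (a' = a ∧ b' = b) ∨ (a' = b ∧ b' = a) := by
    rw [Sym2.eq_iff] at hab_eq; tauto
  have hsimp' : (G.deleteEdges {e | e ∈ l.take i}).SignedSimplicial a b := by
    rcases this with ⟨rfl, rfl⟩ | ⟨rfl, rfl⟩
    · exact hsimp
    · exact simplicial_symm _ hsimp
  obtain ⟨c, d, hcA, hdA, hca, hcb, hda, hdb, hcd, hsgn⟩ := hbad a b haA hbA hab
  set H := G.deleteEdges {e | e ∈ l.take i} with hH
  have hside_ab : G.side a ≠ G.side b := G.bipartite hab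
  -- membership of a vertex of A adjacent (in G) to a or b in the H-edgeNbhd
  have hnbhd : ∀ x, x ∈ A → x ≠ a → x ≠ b → x ∈ H.edgeNbhd a b := by
    intro x hxA hxa hxb
    have hsx : G.side x ≠ G.side a ∨ G.side x ≠ G.side b := by
      by_cases h : G.side x = G.side a
      · right; rw [h]; exact hside_ab
      · left; exact h
    rcases hsx with h | h
    · have hadj : G.Adj x a := hcomp _ _ h
      have : H.graph.Adj a x := by
        rw [hH]
        refine SimpleGraph.deleteEdges_adj.mpr ⟨hadj.symm, hnotdel _ ⟨a, x, rfl, haA, hxA, hadj.symm⟩⟩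
      exact ⟨Or.inl this, by simp [hxa, hxb]⟩
    · have hadj : G.Adj x b := hcomp _ _ h
      have : H.graph.Adj b x := by
        rw [hH]
        refine SimpleGraph.deleteEdges_adj.mpr ⟨hadj.symm, hnotdel _ ⟨b, x, rfl, hbA, hxA, hadj.symm⟩⟩
      exact ⟨Or.inr this, by simp [hxa, hxb]⟩
  have hcN := hnbhd c hcA hca hcb
  have hdN := hnbhd d hdA hda hdb
  have h2 : G.sign c d = true := (hsimp'.2 c hcN d hdN (G.bipartite hcd)).2
  rw [hsgn] at h2; exact Bool.false_ne_true h2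

end SBAux
open SignedBigraph
namespace SBAux
variable {V : Type u} [Fintype V] (G : SignedBigraph V)

omit [Fintype V] in
lemma chordal_of_no_edges (h : ∀ a b : V, ¬ G.Adj a b) : G.IsChordal := by
  refine ⟨[], List.nodup_nil, fun e => ⟨fun he => ?_, fun he => absurd he List.not_mem_nil⟩,
    fun i hi => absurd hi (by simp)⟩
  induction e using Sym2.ind with
  | _ a b => exact (h a b he).elim

lemma bool_opp {x y : Bool} (h : x ≠ y) : y = !x := by
  revert h; cases x <;> cases y <;> simp

lemma exists_enum (x0 : V) (t : Bool) (hx : G.side x0 = t) :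
    ∃ xs : List V, xs.Nodup ∧ (∀ u, u ∈ xs ↔ G.side u = t) ∧
      ∃ h0 : 0 < xs.length, xs[0] = x0 := by
  classical
  refine ⟨x0 :: ((Finset.univ.filter (fun u => G.side u = t)).erase x0).toList, ?_, ?_, by simp, rfl⟩
  · refine List.nodup_cons.mpr ⟨?_, Finset.nodup_toList _⟩
    simp
  · intro u
    simp only [List.mem_cons, Finset.mem_toList, Finset.mem_erase, Finset.mem_filter,
      Finset.mem_univ, true_and]
    constructor
    · rintro (rfl | ⟨-, h⟩) <;> [exact hx; exact h]
    · intro h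
      by_cases hu : u = x0
      · exact Or.inl hu
      · exact Or.inr ⟨hu, h⟩

omit [Fintype V] in
lemma cross_pair_eq {p q p' q' : V} (hp : G.side p = true) (hq : G.side q = false)
    (hp' : G.side p' = true) (hq' : G.side q' = false) (h : s(p, q) = s(p', q')) :
    p = p' ∧ q = q' := by
  rw [Sym2.eq_iff] at h
  rcases h with ⟨rfl, rfl⟩ | ⟨rfl, rfl⟩
  · exact ⟨rfl, rfl⟩
  · rw [hq'] at hp; exact absurd hp (by simp)

lemma chordal_of_cover (hcomp : ∀ a b : V, G.side a ≠ G.side b → G.Adj a b)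
    (x0 y0 : V) (hx0 : G.side x0 = true) (hy0 : G.side y0 = false)
    (hcov : ∀ u v : V, G.Adj u v → G.sign u v = false →
      u = x0 ∨ v = x0 ∨ u = y0 ∨ v = y0) : G.IsChordal := by
  classical
  obtain ⟨xs, hxnd, hxmem, hm0, hxs0⟩ := exists_enum G x0 true hx0
  obtain ⟨ys, hynd, hymem, hn0, hys0⟩ := exists_enum G y0 false hy0
  set m := xs.length with hm
  set n := ys.length with hn
  have hxside : ∀ (a : ℕ) (h : a < m), G.side xs[a] = true := fun a h =>
    (hxmem _).mp (List.getElem_mem h)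
  have hyside : ∀ (b : ℕ) (h : b < n), G.side ys[b] = false := fun b h =>
    (hymem _).mp (List.getElem_mem h)
  have hdiv : ∀ i, i < m * n → i / n < m := by
    intro i hi; exact Nat.div_lt_of_lt_mul (by rwa [mul_comm])
  have hmod : ∀ i, i < m * n → i % n < n := fun i hi => Nat.mod_lt _ hn0
  set f : Fin (m * n) → Sym2 V :=
    fun i => s(xs[i.1 / n]'(hdiv i.1 i.2), ys[i.1 % n]'(hmod i.1 i.2)) with hf
  have hfeq : ∀ (i j : Fin (m * n)), f i = f j → i = j := by
    intro i j h
    rw [hf] at h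
    obtain ⟨h1, h2⟩ := cross_pair_eq G (hxside _ _) (hyside _ _) (hxside _ _) (hyside _ _) h
    have e1 : i.1 / n = j.1 / n := List.Nodup.getElem_inj_iff hxnd |>.mp h1
    have e2 : i.1 % n = j.1 % n := List.Nodup.getElem_inj_iff hynd |>.mp h2
    have key : n * (i.1 / n) + i.1 % n = n * (j.1 / n) + j.1 % n := by rw [e1, e2]
    rw [Nat.div_add_mod, Nat.div_add_mod] at key
    exact Fin.ext key
  have henc : ∀ (a b : ℕ), a < m → b < n → a * n + b < m * n := by
    intro a b ha hb
    calc a * n + b < (a + 1) * n := by rw [add_mul]; omega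
    _ ≤ m * n := Nat.mul_le_mul_right n ha
  have hencdiv : ∀ (a b : ℕ), b < n → (a * n + b) / n = a := by
    intro a b hb
    rw [mul_comm, Nat.mul_add_div hn0, Nat.div_eq_of_lt hb, add_zero]
  have hencmod : ∀ (a b : ℕ), b < n → (a * n + b) % n = b := by
    intro a b hb
    rw [mul_comm, Nat.mul_add_mod, Nat.mod_eq_of_lt hb]
  have hfval : ∀ (a b : ℕ) (ha : a < m) (hb : b < n),
      f ⟨a * n + b, henc a b ha hb⟩ = s(xs[a], ys[b]) := by
    intro a b ha hb
    simp only [hf, hencdiv a b hb, hencmod a b hb]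
  refine ⟨List.ofFn f, List.nodup_ofFn.mpr hfeq, ?_, ?_⟩
  · -- edge set = list membership
    have sub : ∀ u v : V, G.Adj u v → G.side u = true → s(u, v) ∈ List.ofFn f := by
      intro u v huv hu
      have hv : G.side v = false := by
        have h := bool_opp (G.bipartite huv); rw [hu] at h; simpa using h
      obtain ⟨a, ha, hae⟩ := List.mem_iff_getElem.mp ((hxmem u).mpr hu)
      obtain ⟨b, hb, hbe⟩ := List.mem_iff_getElem.mp ((hymem v).mpr hv)
      rw [List.mem_ofFn]
      exact ⟨⟨a * n + b, henc a b ha hb⟩, by rw [hfval a b ha hb, hae, hbe]⟩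
    intro e
    induction e using Sym2.ind with
    | _ u v =>
      constructor
      · intro he
        rw [SimpleGraph.mem_edgeSet] at he
        cases h : G.side u
        · have hv : G.side v = true := by
            have h2 := bool_opp (G.bipartite he); rw [h] at h2; simpa using h2
          rw [Sym2.eq_swap]
          exact sub v u he.symm hv
        · exact sub u v he h
      · intro he
        rw [List.mem_ofFn] at he
        obtain ⟨j, hj⟩ := he
        rw [SimpleGraph.mem_edgeSet]
        have hadj : G.Adj (xs[j.1 / n]'(hdiv j.1 j.2)) (ys[j.1 % n]'(hmod j.1 j.2)) := by
          apply hcomp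
          rw [hxside _ _, hyside _ _]; simp
        rw [hf] at hj
        obtain ⟨h1, h2⟩ | ⟨h1, h2⟩ := Sym2.eq_iff.mp hj
        · rwa [h1, h2] at hadj
        · rw [h1, h2] at hadj; exact hadj.symm
  · -- elimination steps
    intro i hi
    have hilen : i < m * n := by simpa using hi
    have hia : i / n < m := hdiv i hilen
    have hib : i % n < n := hmod i hilen
    have hienc : (i / n) * n + (i % n) = i := by
      rw [mul_comm]; exact Nat.div_add_mod i n
    set Del : Set (Sym2 V) := {e | e ∈ (List.ofFn f).take i} with hDel
    have hDelIff : ∀ e, e ∈ Del ↔ ∃ j, j < i ∧ ∃ hj : j < m * n, e = f ⟨j, hj⟩ := by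
      intro e
      rw [hDel, Set.mem_setOf_eq, mem_take_iff]
      constructor
      · rintro ⟨j, hji, hjl, hje⟩
        have hjl' : j < m * n := by simpa using hjl
        exact ⟨j, hji, hjl', by rw [← hje]; simp⟩
      · rintro ⟨j, hji, hjl, hje⟩
        exact ⟨j, hji, by simpa using hjl, by rw [hje]; simp⟩
    have hdel_of_lt : ∀ (a b : ℕ) (ha : a < m) (hb : b < n),
        (a < i / n ∨ (a = i / n ∧ b < i % n)) → s(xs[a], ys[b]) ∈ Del := by
      intro a b ha hb hcase
      refine (hDelIff _).mpr ⟨a * n + b, ?_, henc a b ha hb, (hfval a b ha hb).symm⟩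
      obtain ⟨K, hK⟩ : ∃ K, (i / n) * n = K := ⟨_, rfl⟩
      rw [hK] at hienc
      rcases hcase with h | ⟨rfl, h⟩
      · have h1 : (a + 1) * n ≤ (i / n) * n := Nat.mul_le_mul_right n h
        rw [hK, add_mul, one_mul] at h1
        obtain ⟨L, hL⟩ : ∃ L, a * n = L := ⟨_, rfl⟩
        rw [hL] at h1 ⊢
        omega
      · rw [hK]
        omega
    have hnotdel : ∀ (a b : ℕ) (ha : a < m) (hb : b < n), i / n ≤ a →
        (a = i / n → i % n ≤ b) → s(xs[a], ys[b]) ∉ Del := by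
      intro a b ha hb h1 h2 hmem'
      obtain ⟨j, hji, hjl, hje⟩ := (hDelIff _).mp hmem'
      rw [hf] at hje
      obtain ⟨e1, e2⟩ := cross_pair_eq G (hxside _ _) (hyside _ _) (hxside _ _) (hyside _ _) hje
      have e1' : a = j / n := List.Nodup.getElem_inj_iff hxnd |>.mp e1
      have e2' : b = j % n := List.Nodup.getElem_inj_iff hynd |>.mp e2
      have hj2 : j = a * n + b := by
        rw [e1', e2', mul_comm]; exact (Nat.div_add_mod j n).symm
      obtain ⟨K, hK⟩ : ∃ K, (i / n) * n = K := ⟨_, rfl⟩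
      rw [hK] at hienc
      by_cases hcase : a = i / n
      · have hb2 := h2 hcase
        rw [hcase, hK] at hj2
        omega
      · have hlt : i / n + 1 ≤ a := by omega
        have h3 : (i / n + 1) * n ≤ a * n := Nat.mul_le_mul_right n hlt
        rw [add_mul, one_mul, hK] at h3
        obtain ⟨L, hL⟩ : ∃ L, a * n = L := ⟨_, rfl⟩
        rw [hL] at h3 hj2
        omega
    refine ⟨xs[i / n], ys[i % n], ?_, ?_, ?_⟩
    · simp only [List.get_eq_getElem, List.getElem_ofFn]; rfl
    · refine SimpleGraph.deleteEdges_adj.mpr ⟨?_, ?_⟩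
      · apply hcomp; rw [hxside _ _, hyside _ _]; simp
      · exact hnotdel _ _ hia hib le_rfl (fun _ => le_rfl)
    · -- the biclique condition
      intro c hc d hd hside
      have hchar : ∀ x, x ∈ (G.deleteEdges Del).edgeNbhd xs[i / n] ys[i % n] →
          (G.side x = true → ∃ a, ∃ ha : a < m, x = xs[a] ∧ i / n < a) ∧
          (G.side x = false → ∃ b, ∃ hb : b < n, x = ys[b] ∧ i % n < b) := by
        intro x hx
        obtain ⟨hx1, hx2⟩ := hx
        simp only [Set.mem_insert_iff, Set.mem_singleton_iff, not_or] at hx2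
        obtain ⟨hxX, hxY⟩ := hx2
        constructor
        · intro hxs
          have hadj : (G.graph.deleteEdges Del).Adj ys[i % n] x := by
            rcases hx1 with h | h
            · exfalso
              have h2 := G.bipartite (SimpleGraph.deleteEdges_adj.mp h).1
              rw [hxside _ hia, hxs] at h2; exact h2 rfl
            · exact h
          obtain ⟨hadj1, hadj2⟩ := SimpleGraph.deleteEdges_adj.mp hadj
          obtain ⟨a, ha, hae⟩ := List.mem_iff_getElem.mp ((hxmem x).mpr hxs)
          refine ⟨a, ha, hae.symm, ?_⟩
          have hne : a ≠ i / n := by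
            intro h; subst h; exact hxX hae.symm
          rcases Nat.lt_or_ge (i / n) a with h | h
          · exact h
          · exfalso
            apply hadj2
            have hsw : s(ys[i % n], x) = s(xs[a], ys[i % n]) := by
              rw [← hae]; exact Sym2.eq_swap
            rw [hsw]
            exact hdel_of_lt a (i % n) ha hib (Or.inl (by omega))
        · intro hxs
          have hadj : (G.graph.deleteEdges Del).Adj xs[i / n] x := by
            rcases hx1 with h | h
            · exact h
            · exfalso
              have h2 := G.bipartite (SimpleGraph.deleteEdges_adj.mp h).1
              rw [hyside _ hib, hxs] at h2; exact h2 rfl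
          obtain ⟨hadj1, hadj2⟩ := SimpleGraph.deleteEdges_adj.mp hadj
          obtain ⟨b, hb, hbe⟩ := List.mem_iff_getElem.mp ((hymem x).mpr hxs)
          refine ⟨b, hb, hbe.symm, ?_⟩
          have hne : b ≠ i % n := by
            intro h; subst h; exact hxY hbe.symm
          rcases Nat.lt_or_ge (i % n) b with h | h
          · exact h
          · exfalso
            apply hadj2
            rw [← hbe]
            exact hdel_of_lt (i / n) b hia hb (Or.inr ⟨rfl, by omega⟩)
      have hpair : ∀ (a b : ℕ) (ha : a < m) (hb : b < n), i / n < a → i % n < b →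
          (G.deleteEdges Del).Adj xs[a] ys[b] ∧ G.sign xs[a] ys[b] = true := by
        intro a b ha hb hia' hib'
        have hadjG : G.Adj xs[a] ys[b] := by
          apply hcomp; rw [hxside _ _, hyside _ _]; simp
        constructor
        · exact SimpleGraph.deleteEdges_adj.mpr ⟨hadjG,
            hnotdel a b ha hb (le_of_lt hia') (fun h => absurd h (by omega))⟩
        · cases hsgn : G.sign xs[a] ys[b]
          · exfalso
            rcases hcov _ _ hadjG hsgn with h | h | h | h
            · have ha0 : a = 0 := List.Nodup.getElem_inj_iff hxnd |>.mp (h.trans hxs0.symm)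
              rw [ha0] at hia'; exact Nat.not_lt_zero _ hia'
            · have h2 := hyside b hb; rw [h, hx0] at h2; exact absurd h2 (by simp)
            · have h2 := hxside a ha; rw [h, hy0] at h2; exact absurd h2 (by simp)
            · have hb0 : b = 0 := List.Nodup.getElem_inj_iff hynd |>.mp (h.trans hys0.symm)
              rw [hb0] at hib'; exact Nat.not_lt_zero _ hib'
          · rfl
      have hside2 : G.side c ≠ G.side d := hside
      cases hsc : G.side c
      · -- c is a column, d is a row
        have hsd : G.side d = true := by
          have h := bool_opp hside2; rw [hsc] at h; simpa using h
        obtain ⟨b, hb, rfl, hb'⟩ := (hchar c hc).2 hsc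
        obtain ⟨a, ha, rfl, ha'⟩ := (hchar d hd).1 hsd
        obtain ⟨h1, h2⟩ := hpair a b ha hb ha' hb'
        refine ⟨?_, ?_⟩
        · exact h1.symm
        · show G.sign ys[b] xs[a] = true
          rw [G.sign_symm]; exact h2
      · -- c is a row, d is a column
        have hsd : G.side d = false := by
          have h := bool_opp hside2; rw [hsc] at h; simpa using h
        obtain ⟨a, ha, rfl, ha'⟩ := (hchar c hc).1 hsc
        obtain ⟨b, hb, rfl, hb'⟩ := (hchar d hd).2 hsd
        exact hpair a b ha hb ha' hb'

end SBAux
open SignedBigraph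
namespace SBAux
variable {V : Type u} (G : SignedBigraph V)

lemma mkM1 (hcomp : ∀ a b : V, G.side a ≠ G.side b → G.Adj a b) (t : Bool) (u1 u2 v1 v2 : V)
    (hu1 : G.side u1 = t) (hu2 : G.side u2 = t) (hv1 : G.side v1 = !t) (hv2 : G.side v2 = !t) (du1u2 : u1 ≠ u2) (dv1v2 : v1 ≠ v2) (s00 : G.sign u1 v1 = false) (s01 : G.sign u1 v2 = false) (s10 : G.sign u2 v1 = false) (s11 : G.sign u2 v2 = false) : G.HasM1 := by
  have adj : ∀ a b : V, G.side a = t → G.side b = !t → G.Adj a b :=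
    fun a b ha hb => hcomp a b (by rw [ha, hb]; cases t <;> simp)
  have nadj : ∀ a b : V, G.side a = G.side b → ¬ G.Adj a b :=
    fun a b h hadj => G.bipartite hadj h
  have necr : ∀ a b : V, G.side a = t → G.side b = !t → a ≠ b :=
    fun a b ha hb he => by subst he; rw [ha] at hb; exact absurd hb (by simp)
  refine ⟨u1, u2, v1, v2, ?_, adj _ _ hu1 hv1, adj _ _ hu1 hv2, adj _ _ hu2 hv1, adj _ _ hu2 hv2, nadj _ _ (hu1.trans hu2.symm), nadj _ _ (hv1.trans hv2.symm), s00, s01, s10, s11⟩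
  simp only [List.pairwise_cons, List.mem_cons, List.mem_singleton, List.not_mem_nil, or_false,
    forall_eq_or_imp, forall_eq, false_implies, implies_true, and_true, List.Pairwise.nil]
  exact ⟨⟨du1u2, necr _ _ hu1 hv1, necr _ _ hu1 hv2⟩, ⟨necr _ _ hu2 hv1, necr _ _ hu2 hv2⟩, dv1v2⟩

lemma mkM2 (hcomp : ∀ a b : V, G.side a ≠ G.side b → G.Adj a b) (t : Bool) (u1 u2 v1 v2 v3 : V)
    (hu1 : G.side u1 = t) (hu2 : G.side u2 = t) (hv1 : G.side v1 = !t) (hv2 : G.side v2 = !t) (hv3 : G.side v3 = !t) (du1u2 : u1 ≠ u2) (dv1v2 : v1 ≠ v2) (dv1v3 : v1 ≠ v3) (dv2v3 : v2 ≠ v3) (s00 : G.sign u1 v1 = false) (s01 : G.sign u1 v2 = false) (s11 : G.sign u2 v2 = false) (s12 : G.sign u2 v3 = false) (s02 : G.sign u1 v3 = true) (s10 : G.sign u2 v1 = true) : G.HasM2 := by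
  have adj : ∀ a b : V, G.side a = t → G.side b = !t → G.Adj a b :=
    fun a b ha hb => hcomp a b (by rw [ha, hb]; cases t <;> simp)
  have nadj : ∀ a b : V, G.side a = G.side b → ¬ G.Adj a b :=
    fun a b h hadj => G.bipartite hadj h
  have necr : ∀ a b : V, G.side a = t → G.side b = !t → a ≠ b :=
    fun a b ha hb he => by subst he; rw [ha] at hb; exact absurd hb (by simp)
  refine ⟨u1, u2, v1, v2, v3, ?_, adj _ _ hu1 hv1, adj _ _ hu1 hv2, adj _ _ hu1 hv3, adj _ _ hu2 hv1, adj _ _ hu2 hv2, adj _ _ hu2 hv3, nadj _ _ (hu1.trans hu2.symm), nadj _ _ (hv1.trans hv2.symm), nadj _ _ (hv1.trans hv3.symm), nadj _ _ (hv2.trans hv3.symm), s00, s01, s11, s12, s02, s10⟩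
  simp only [List.pairwise_cons, List.mem_cons, List.mem_singleton, List.not_mem_nil, or_false,
    forall_eq_or_imp, forall_eq, false_implies, implies_true, and_true, List.Pairwise.nil]
  exact ⟨⟨du1u2, necr _ _ hu1 hv1, necr _ _ hu1 hv2, necr _ _ hu1 hv3⟩, ⟨necr _ _ hu2 hv1, necr _ _ hu2 hv2, necr _ _ hu2 hv3⟩, ⟨dv1v2, dv1v3⟩, dv2v3⟩

lemma mkM3 (hcomp : ∀ a b : V, G.side a ≠ G.side b → G.Adj a b) (t : Bool) (u1 u2 v1 v2 v3 v4 : V)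
    (hu1 : G.side u1 = t) (hu2 : G.side u2 = t) (hv1 : G.side v1 = !t) (hv2 : G.side v2 = !t) (hv3 : G.side v3 = !t) (hv4 : G.side v4 = !t) (du1u2 : u1 ≠ u2) (dv1v2 : v1 ≠ v2) (dv1v3 : v1 ≠ v3) (dv1v4 : v1 ≠ v4) (dv2v3 : v2 ≠ v3) (dv2v4 : v2 ≠ v4) (dv3v4 : v3 ≠ v4) (s00 : G.sign u1 v1 = false) (s01 : G.sign u1 v2 = false) (s12 : G.sign u2 v3 = false) (s13 : G.sign u2 v4 = false) (s02 : G.sign u1 v3 = true) (s03 : G.sign u1 v4 = true) (s10 : G.sign u2 v1 = true) (s11 : G.sign u2 v2 = true) : G.HasM3 := by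
  have adj : ∀ a b : V, G.side a = t → G.side b = !t → G.Adj a b :=
    fun a b ha hb => hcomp a b (by rw [ha, hb]; cases t <;> simp)
  have nadj : ∀ a b : V, G.side a = G.side b → ¬ G.Adj a b :=
    fun a b h hadj => G.bipartite hadj h
  have necr : ∀ a b : V, G.side a = t → G.side b = !t → a ≠ b :=
    fun a b ha hb he => by subst he; rw [ha] at hb; exact absurd hb (by simp)
  refine ⟨u1, u2, v1, v2, v3, v4, ?_, adj _ _ hu1 hv1, adj _ _ hu1 hv2, adj _ _ hu1 hv3, adj _ _ hu1 hv4, adj _ _ hu2 hv1, adj _ _ hu2 hv2, adj _ _ hu2 hv3, adj _ _ hu2 hv4, nadj _ _ (hu1.trans hu2.symm), nadj _ _ (hv1.trans hv2.symm), nadj _ _ (hv1.trans hv3.symm), nadj _ _ (hv1.trans hv4.symm), nadj _ _ (hv2.trans hv3.symm), nadj _ _ (hv2.trans hv4.symm), nadj _ _ (hv3.trans hv4.symm), s00, s01, s12, s13, s02, s03, s10, s11⟩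
  simp only [List.pairwise_cons, List.mem_cons, List.mem_singleton, List.not_mem_nil, or_false,
    forall_eq_or_imp, forall_eq, false_implies, implies_true, and_true, List.Pairwise.nil]
  exact ⟨⟨du1u2, necr _ _ hu1 hv1, necr _ _ hu1 hv2, necr _ _ hu1 hv3, necr _ _ hu1 hv4⟩, ⟨necr _ _ hu2 hv1, necr _ _ hu2 hv2, necr _ _ hu2 hv3, necr _ _ hu2 hv4⟩, ⟨dv1v2, dv1v3, dv1v4⟩, ⟨dv2v3, dv2v4⟩, dv3v4⟩

lemma mkM4 (hcomp : ∀ a b : V, G.side a ≠ G.side b → G.Adj a b) (t : Bool) (u1 u2 u3 v1 v2 v3 : V)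
    (hu1 : G.side u1 = t) (hu2 : G.side u2 = t) (hu3 : G.side u3 = t) (hv1 : G.side v1 = !t) (hv2 : G.side v2 = !t) (hv3 : G.side v3 = !t) (du1u2 : u1 ≠ u2) (du1u3 : u1 ≠ u3) (du2u3 : u2 ≠ u3) (dv1v2 : v1 ≠ v2) (dv1v3 : v1 ≠ v3) (dv2v3 : v2 ≠ v3) (s00 : G.sign u1 v1 = false) (s11 : G.sign u2 v2 = false) (s22 : G.sign u3 v3 = false) (s01 : G.sign u1 v2 = true) (s02 : G.sign u1 v3 = true) (s10 : G.sign u2 v1 = true) (s12 : G.sign u2 v3 = true) (s20 : G.sign u3 v1 = true) (s21 : G.sign u3 v2 = true) : G.HasM4 := by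
  have adj : ∀ a b : V, G.side a = t → G.side b = !t → G.Adj a b :=
    fun a b ha hb => hcomp a b (by rw [ha, hb]; cases t <;> simp)
  have nadj : ∀ a b : V, G.side a = G.side b → ¬ G.Adj a b :=
    fun a b h hadj => G.bipartite hadj h
  have necr : ∀ a b : V, G.side a = t → G.side b = !t → a ≠ b :=
    fun a b ha hb he => by subst he; rw [ha] at hb; exact absurd hb (by simp)
  refine ⟨u1, u2, u3, v1, v2, v3, ?_, adj _ _ hu1 hv1, adj _ _ hu1 hv2, adj _ _ hu1 hv3, adj _ _ hu2 hv1, adj _ _ hu2 hv2, adj _ _ hu2 hv3, adj _ _ hu3 hv1, adj _ _ hu3 hv2, adj _ _ hu3 hv3, nadj _ _ (hu1.trans hu2.symm), nadj _ _ (hu1.trans hu3.symm), nadj _ _ (hu2.trans hu3.symm), nadj _ _ (hv1.trans hv2.symm), nadj _ _ (hv1.trans hv3.symm), nadj _ _ (hv2.trans hv3.symm), s00, s11, s22, s01, s02, s10, s12, s20, s21⟩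
  simp only [List.pairwise_cons, List.mem_cons, List.mem_singleton, List.not_mem_nil, or_false,
    forall_eq_or_imp, forall_eq, false_implies, implies_true, and_true, List.Pairwise.nil]
  exact ⟨⟨du1u2, du1u3, necr _ _ hu1 hv1, necr _ _ hu1 hv2, necr _ _ hu1 hv3⟩, ⟨du2u3, necr _ _ hu2 hv1, necr _ _ hu2 hv2, necr _ _ hu2 hv3⟩, ⟨necr _ _ hu3 hv1, necr _ _ hu3 hv2, necr _ _ hu3 hv3⟩, ⟨dv1v2, dv1v3⟩, dv2v3⟩

lemma mkM5 (hcomp : ∀ a b : V, G.side a ≠ G.side b → G.Adj a b) (t : Bool) (x1 x2 x3 y1 y2 y3 : V)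
    (hx1 : G.side x1 = t) (hx2 : G.side x2 = t) (hx3 : G.side x3 = t) (hy1 : G.side y1 = !t) (hy2 : G.side y2 = !t) (hy3 : G.side y3 = !t) (dx1x2 : x1 ≠ x2) (dx1x3 : x1 ≠ x3) (dx2x3 : x2 ≠ x3) (dy1y2 : y1 ≠ y2) (dy1y3 : y1 ≠ y3) (dy2y3 : y2 ≠ y3) (s00 : G.sign x1 y1 = false) (s01 : G.sign x1 y2 = false) (s11 : G.sign x2 y2 = false) (s22 : G.sign x3 y3 = false) (s02 : G.sign x1 y3 = true) (s10 : G.sign x2 y1 = true) (s12 : G.sign x2 y3 = true) (s20 : G.sign x3 y1 = true) (s21 : G.sign x3 y2 = true) : G.HasM5 := by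
  have adj : ∀ a b : V, G.side a = t → G.side b = !t → G.Adj a b :=
    fun a b ha hb => hcomp a b (by rw [ha, hb]; cases t <;> simp)
  have nadj : ∀ a b : V, G.side a = G.side b → ¬ G.Adj a b :=
    fun a b h hadj => G.bipartite hadj h
  have necr : ∀ a b : V, G.side a = t → G.side b = !t → a ≠ b :=
    fun a b ha hb he => by subst he; rw [ha] at hb; exact absurd hb (by simp)
  refine ⟨x1, x2, x3, y1, y2, y3, ?_, adj _ _ hx1 hy1, adj _ _ hx1 hy2, adj _ _ hx1 hy3, adj _ _ hx2 hy1, adj _ _ hx2 hy2, adj _ _ hx2 hy3, adj _ _ hx3 hy1, adj _ _ hx3 hy2, adj _ _ hx3 hy3, nadj _ _ (hx1.trans hx2.symm), nadj _ _ (hx1.trans hx3.symm), nadj _ _ (hx2.trans hx3.symm), nadj _ _ (hy1.trans hy2.symm), nadj _ _ (hy1.trans hy3.symm), nadj _ _ (hy2.trans hy3.symm), s00, s01, s11, s22, s02, s10, s12, s20, s21⟩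
  simp only [List.pairwise_cons, List.mem_cons, List.mem_singleton, List.not_mem_nil, or_false,
    forall_eq_or_imp, forall_eq, false_implies, implies_true, and_true, List.Pairwise.nil]
  exact ⟨⟨dx1x2, dx1x3, necr _ _ hx1 hy1, necr _ _ hx1 hy2, necr _ _ hx1 hy3⟩, ⟨dx2x3, necr _ _ hx2 hy1, necr _ _ hx2 hy2, necr _ _ hx2 hy3⟩, ⟨necr _ _ hx3 hy1, necr _ _ hx3 hy2, necr _ _ hx3 hy3⟩, ⟨dy1y2, dy1y3⟩, dy2y3⟩

end SBAux
open SignedBigraph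
namespace SBAux
variable {V : Type u} (G : SignedBigraph V)

def HasSomeM : Prop := G.HasM1 ∨ G.HasM2 ∨ G.HasM3 ∨ G.HasM4 ∨ G.HasM5

lemma sgf {a b : V} (h : G.sign a b = false) : G.sign b a = false := by
  rw [G.sign_symm]; exact h

lemma sgt {a b : V} (h : G.sign a b = true) : G.sign b a = true := by
  rw [G.sign_symm]; exact h

lemma side_nn {a : V} {t : Bool} (h : G.side a = t) : G.side a = !(!t) := by
  rw [h, Bool.not_not]

lemma bool_neq {x t : Bool} (h : ¬ x = t) : x = !t := by
  cases x <;> cases t <;> simp_all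

lemma lemT3 (hcomp : ∀ a b : V, G.side a ≠ G.side b → G.Adj a b) (t : Bool)
    (p1 p2 q0 q1 q2 : V)
    (hp1 : G.side p1 = t) (hp2 : G.side p2 = t)
    (hq0 : G.side q0 = !t) (hq1 : G.side q1 = !t) (hq2 : G.side q2 = !t)
    (dp : p1 ≠ p2) (d01 : q0 ≠ q1) (d02 : q0 ≠ q2) (d12 : q1 ≠ q2)
    (n10 : G.sign p1 q0 = false) (n11 : G.sign p1 q1 = false)
    (n20 : G.sign p2 q0 = false) (n22 : G.sign p2 q2 = false) : HasSomeM G := by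
  cases h12 : G.sign p1 q2 with
  | false => exact Or.inl (mkM1 G hcomp t p1 p2 q0 q2 hp1 hp2 hq0 hq2 dp d02 n10 h12 n20 n22)
  | true => cases h21 : G.sign p2 q1 with
    | false => exact Or.inl (mkM1 G hcomp t p1 p2 q0 q1 hp1 hp2 hq0 hq1 dp d01 n10 n11 n20 h21)
    | true => exact (Or.inr (Or.inl (mkM2 G hcomp t p1 p2 q1 q0 q2 hp1 hp2 hq1 hq0 hq2 dp d01.symm d12 d02 n11 n10 n20 n22 h12 h21)))

lemma lemT5 (hcomp : ∀ a b : V, G.side a ≠ G.side b → G.Adj a b) (t : Bool)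
    (p1 p2 qa qb qc qd : V)
    (hp1 : G.side p1 = t) (hp2 : G.side p2 = t)
    (hqa : G.side qa = !t) (hqb : G.side qb = !t) (hqc : G.side qc = !t) (hqd : G.side qd = !t)
    (dp : p1 ≠ p2) (dab : qa ≠ qb) (dac : qa ≠ qc) (dad : qa ≠ qd)
    (dbc : qb ≠ qc) (dbd : qb ≠ qd) (dcd : qc ≠ qd)
    (na : G.sign p1 qa = false) (nb : G.sign p1 qb = false)
    (nc : G.sign p2 qc = false) (nd : G.sign p2 qd = false) : HasSomeM G := by
  cases h1c : G.sign p1 qc with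
  | false => exact (lemT3 G hcomp t p1 p2 qc qa qd hp1 hp2 hqc hqa hqd dp dac.symm dcd dad h1c na nc nd)
  | true => cases h1d : G.sign p1 qd with
    | false => exact (lemT3 G hcomp t p1 p2 qd qa qc hp1 hp2 hqd hqa hqc dp dad.symm dcd.symm dac h1d na nd nc)
    | true => cases h2a : G.sign p2 qa with
      | false => exact (lemT3 G hcomp t p1 p2 qa qb qc hp1 hp2 hqa hqb hqc dp dab dac dbc na nb h2a nc)
      | true => cases h2b : G.sign p2 qb with
        | false => exact (lemT3 G hcomp t p1 p2 qb qa qc hp1 hp2 hqb hqa hqc dp dab.symm dbc dac nb na h2b nc)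
        | true => exact (Or.inr (Or.inr (Or.inl (mkM3 G hcomp t p1 p2 qa qb qc qd hp1 hp2 hqa hqb hqc hqd dp dab dac dad dbc dbd dcd na nb nc nd h1c h1d h2a h2b))))

lemma lemSHAPE5 (hcomp : ∀ a b : V, G.side a ≠ G.side b → G.Adj a b) (t : Bool)
    (p1 p2 p3 q1 q2 q3 : V)
    (hp1 : G.side p1 = t) (hp2 : G.side p2 = t) (hp3 : G.side p3 = t)
    (hq1 : G.side q1 = !t) (hq2 : G.side q2 = !t) (hq3 : G.side q3 = !t)
    (d12 : p1 ≠ p2) (d13 : p1 ≠ p3) (d23 : p2 ≠ p3)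
    (e12 : q1 ≠ q2) (e13 : q1 ≠ q3) (e23 : q2 ≠ q3)
    (n11 : G.sign p1 q1 = false) (n12 : G.sign p1 q2 = false)
    (n22 : G.sign p2 q2 = false) (n33 : G.sign p3 q3 = false) : HasSomeM G := by
  cases s21 : G.sign p2 q1 with
  | false => exact Or.inl (mkM1 G hcomp t p1 p2 q1 q2 hp1 hp2 hq1 hq2 d12 e12 n11 n12 s21 n22)
  | true => cases s13 : G.sign p1 q3 with
    | false => exact (lemT3 G hcomp (!t) q2 q3 p1 p2 p3 hq2 hq3 (side_nn G hp1) (side_nn G hp2) (side_nn G hp3) e23 d12 d13 d23 (sgf G n12) (sgf G n22) (sgf G s13) (sgf G n33))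
    | true => cases s23 : G.sign p2 q3 with
      | false => exact (lemT3 G hcomp t p1 p2 q2 q1 q3 hp1 hp2 hq2 hq1 hq3 d12 e12.symm e23 e13 n12 n11 n22 s23)
      | true => cases s31 : G.sign p3 q1 with
        | false => exact (lemT3 G hcomp (!t) q1 q2 p1 p3 p2 hq1 hq2 (side_nn G hp1) (side_nn G hp3) (side_nn G hp2) e12 d13 d12 d23.symm (sgf G n11) (sgf G s31) (sgf G n12) (sgf G n22))
        | true => cases s32 : G.sign p3 q2 with
          | false => exact (lemT3 G hcomp t p1 p3 q2 q1 q3 hp1 hp3 hq2 hq1 hq3 d13 e12.symm e23 e13 n12 n11 s32 n33)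
          | true => exact (Or.inr (Or.inr (Or.inr (Or.inr (mkM5 G hcomp t p1 p2 p3 q1 q2 q3 hp1 hp2 hp3 hq1 hq2 hq3 d12 d13 d23 e12 e13 e23 n11 n12 n22 n33 s13 s21 s23 s31 s32)))))

lemma lemMATCH3 (hcomp : ∀ a b : V, G.side a ≠ G.side b → G.Adj a b) (t : Bool)
    (p1 p2 p3 q1 q2 q3 : V)
    (hp1 : G.side p1 = t) (hp2 : G.side p2 = t) (hp3 : G.side p3 = t)
    (hq1 : G.side q1 = !t) (hq2 : G.side q2 = !t) (hq3 : G.side q3 = !t)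
    (d12 : p1 ≠ p2) (d13 : p1 ≠ p3) (d23 : p2 ≠ p3)
    (e12 : q1 ≠ q2) (e13 : q1 ≠ q3) (e23 : q2 ≠ q3)
    (n1 : G.sign p1 q1 = false) (n2 : G.sign p2 q2 = false) (n3 : G.sign p3 q3 = false) :
    HasSomeM G := by
  cases s12 : G.sign p1 q2 with
  | false => exact (lemSHAPE5 G hcomp t p1 p2 p3 q1 q2 q3 hp1 hp2 hp3 hq1 hq2 hq3 d12 d13 d23 e12 e13 e23 n1 s12 n2 n3)
  | true => cases s13 : G.sign p1 q3 with
    | false => exact (lemSHAPE5 G hcomp t p1 p3 p2 q1 q3 q2 hp1 hp3 hp2 hq1 hq3 hq2 d13 d12 d23.symm e13 e12 e23.symm n1 s13 n3 n2)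
    | true => cases s21 : G.sign p2 q1 with
      | false => exact (lemSHAPE5 G hcomp t p2 p1 p3 q2 q1 q3 hp2 hp1 hp3 hq2 hq1 hq3 d12.symm d23 d13 e12.symm e23 e13 n2 s21 n1 n3)
      | true => cases s23 : G.sign p2 q3 with
        | false => exact (lemSHAPE5 G hcomp t p2 p3 p1 q2 q3 q1 hp2 hp3 hp1 hq2 hq3 hq1 d23 d12.symm d13.symm e23 e12.symm e13.symm n2 s23 n3 n1)
        | true => cases s31 : G.sign p3 q1 with
          | false => exact (lemSHAPE5 G hcomp t p3 p1 p2 q3 q1 q2 hp3 hp1 hp2 hq3 hq1 hq2 d13.symm d23.symm d12 e13.symm e23.symm e12 n3 s31 n1 n2)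
          | true => cases s32 : G.sign p3 q2 with
            | false => exact (lemSHAPE5 G hcomp t p3 p2 p1 q3 q2 q1 hp3 hp2 hp1 hq3 hq2 hq1 d23.symm d13.symm d12.symm e23.symm e13.symm e12.symm n3 s32 n2 n1)
            | true => exact (Or.inr (Or.inr (Or.inr (Or.inl (mkM4 G hcomp t p1 p2 p3 q1 q2 q3 hp1 hp2 hp3 hq1 hq2 hq3 d12 d13 d23 e12 e13 e23 n1 n2 n3 s12 s13 s21 s23 s31 s32)))))

/-- The "key" property extracted from the absence of a cover. -/
def KeyProp : Prop :=
  ∀ (t : Bool) (r c : V), G.side r ≠ G.side c →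
    ∃ p q : V, G.side p = t ∧ G.side q = !t ∧ G.Adj p q ∧ G.sign p q = false ∧
      p ≠ r ∧ p ≠ c ∧ q ≠ r ∧ q ≠ c

lemma lemSHAPEL (hcomp : ∀ a b : V, G.side a ≠ G.side b → G.Adj a b) (hkey : KeyProp G)
    (t : Bool) (p1 p2 q1 q2 q3 : V)
    (hp1 : G.side p1 = t) (hp2 : G.side p2 = t)
    (hq1 : G.side q1 = !t) (hq2 : G.side q2 = !t) (hq3 : G.side q3 = !t)
    (dp : p1 ≠ p2) (e12 : q1 ≠ q2) (e13 : q1 ≠ q3) (e23 : q2 ≠ q3)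
    (n11 : G.sign p1 q1 = false) (n22 : G.sign p2 q2 = false) (n23 : G.sign p2 q3 = false)
    (t12 : G.sign p1 q2 = true) (t21 : G.sign p2 q1 = true) : HasSomeM G := by
  cases s13 : G.sign p1 q3 with
  | false => exact (lemT3 G hcomp t p1 p2 q3 q1 q2 hp1 hp2 hq3 hq1 hq2 dp e13.symm e23.symm e12 s13 n11 n23 n22)
  | true =>
    obtain ⟨p4, q4, hp4, hq4, hadj4, n44, g1, g2, g3, g4⟩ := hkey t p2 q1 (by rw [hp2, hq1]; simp)
    by_cases h41 : p4 = p1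
    · have n14 : G.sign p1 q4 = false := by rw [← h41]; exact n44
      have d4b : q4 ≠ q2 := by
        intro he; rw [he] at n14; rw [n14] at t12; exact Bool.false_ne_true t12
      have d4c : q4 ≠ q3 := by
        intro he; rw [he] at n14; rw [n14] at s13; exact Bool.false_ne_true s13
      exact lemT5 G hcomp t p1 p2 q1 q4 q2 q3 hp1 hp2 hq1 hq4 hq2 hq3 dp
        g4.symm e12 e13 d4b d4c e23 n11 n14 n22 n23
    · by_cases h42 : q4 = q2
      · have n42 : G.sign p4 q2 = false := by rw [← h42]; exact n44
        exact lemSHAPE5 G hcomp (!t) q2 q3 q1 p4 p2 p1 hq2 hq3 hq1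
          (side_nn G hp4) (side_nn G hp2) (side_nn G hp1)
          e23 e12.symm e13.symm g1 h41 dp.symm
          (sgf G n42) (sgf G n22) (sgf G n23) (sgf G n11)
      · by_cases h43 : q4 = q3
        · have n43 : G.sign p4 q3 = false := by rw [← h43]; exact n44
          exact lemSHAPE5 G hcomp (!t) q3 q2 q1 p4 p2 p1 hq3 hq2 hq1
            (side_nn G hp4) (side_nn G hp2) (side_nn G hp1)
            e23.symm e13.symm e12.symm g1 h41 dp.symm
            (sgf G n43) (sgf G n23) (sgf G n22) (sgf G n11)
        · exact lemMATCH3 G hcomp t p1 p2 p4 q1 q2 q4 hp1 hp2 hp4 hq1 hq2 hq4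
            dp (Ne.symm h41) (Ne.symm g1) e12 (Ne.symm g4) (Ne.symm h42) n11 n22 n44

lemma lemSHAPEP (hcomp : ∀ a b : V, G.side a ≠ G.side b → G.Adj a b) (hkey : KeyProp G)
    (t : Bool) (A B c c' : V)
    (hA : G.side A = t) (hB : G.side B = t)
    (hc : G.side c = !t) (hc' : G.side c' = !t)
    (dAB : A ≠ B) (dcc' : c ≠ c')
    (nAc : G.sign A c = false) (nAc' : G.sign A c' = false) (nBc' : G.sign B c' = false)
    (tBc : G.sign B c = true) : HasSomeM G := by
  obtain ⟨r3, c3, hr3, hc3, hadj3, n3, g1, g2, g3, g4⟩ := hkey t A c' (by rw [hA, hc']; simp)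
  by_cases hB3 : r3 = B
  · have nB3 : G.sign B c3 = false := by rw [← hB3]; exact n3
    have d3c : c3 ≠ c := by
      intro he; rw [he] at nB3; rw [nB3] at tBc; exact Bool.false_ne_true tBc
    exact lemT3 G hcomp t A B c' c c3 hA hB hc' hc hc3 dAB dcc'.symm (Ne.symm g4) d3c.symm
      nAc' nAc nBc' nB3
  · by_cases hc3c : c3 = c
    · have n3c : G.sign r3 c = false := by rw [← hc3c]; exact n3
      exact lemT3 G hcomp (!t) c c' A r3 B hc hc'
        (side_nn G hA) (side_nn G hr3) (side_nn G hB)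
        dcc' (Ne.symm g1) dAB hB3
        (sgf G nAc) (sgf G n3c) (sgf G nAc') (sgf G nBc')
    · exact lemSHAPE5 G hcomp t A B r3 c c' c3 hA hB hr3 hc hc' hc3
        dAB (Ne.symm g1) (Ne.symm hB3) dcc' (Ne.symm hc3c) (Ne.symm g4)
        nAc nAc' nBc' n3

lemma cover_exists (hcomp : ∀ a b : V, G.side a ≠ G.side b → G.Adj a b)
    (hM : ¬ HasSomeM G) (u0 v0 : V) (hedge : G.Adj u0 v0) :
    ∃ r c : V, G.side r = true ∧ G.side c = false ∧
      ∀ u v : V, G.Adj u v → G.sign u v = false → u = r ∨ v = r ∨ u = c ∨ v = c := by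
  by_contra hno
  have hkey : KeyProp G := by
    intro t r c hrc
    have hex : ∃ u v, G.Adj u v ∧ G.sign u v = false ∧ u ≠ r ∧ u ≠ c ∧ v ≠ r ∧ v ≠ c := by
      by_contra hcon
      push_neg at hcon
      apply hno
      cases hr : G.side r with
      | true =>
        have hcE : G.side c = false := by
          have := bool_opp hrc; rw [hr] at this; simpa using this
        refine ⟨r, c, hr, hcE, ?_⟩
        intro u v huv hs
        by_cases h1 : u = r; · tauto
        by_cases h2 : u = c; · tauto
        by_cases h3 : v = r; · tauto
        by_cases h4 : v = c; · tauto
        exact absurd (hcon u v huv hs h1 h2 h3) h4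
      | false =>
        have hcE : G.side c = true := by
          have := bool_opp hrc; rw [hr] at this; simpa using this
        refine ⟨c, r, hcE, hr, ?_⟩
        intro u v huv hs
        by_cases h1 : u = r; · tauto
        by_cases h2 : u = c; · tauto
        by_cases h3 : v = r; · tauto
        by_cases h4 : v = c; · tauto
        exact absurd (hcon u v huv hs h1 h2 h3) h4
    obtain ⟨u, v, huv, hs, h1, h2, h3, h4⟩ := hex
    by_cases hu : G.side u = t
    · have hv : G.side v = !t := by
        have := bool_opp (G.bipartite huv); rw [hu] at this; exact this
      exact ⟨u, v, hu, hv, huv, hs, h1, h2, h3, h4⟩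
    · have hu' : G.side u = !t := bool_neq hu
      have hv : G.side v = t := by
        have := bool_opp (G.bipartite huv); rw [hu'] at this
        rw [this, Bool.not_not]
      exact ⟨v, u, hv, hu', huv.symm, sgf G hs, h3, h4, h1, h2⟩
  apply hM
  obtain ⟨r1, c1, hr1, hc1, hadj1, n1, _, _, _, _⟩ := hkey true u0 v0 (G.bipartite hedge)
  obtain ⟨r2, c2, hr2, hc2, hadj2, n2, g1, g2, g3, g4⟩ := hkey true r1 c1 (by rw [hr1, hc1]; simp)
  cases s12 : G.sign r1 c2 with
  | false => cases s21 : G.sign r2 c1 with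
    | false => exact (Or.inl (mkM1 G hcomp true r1 r2 c1 c2 hr1 hr2 hc1 hc2 (Ne.symm g1) (Ne.symm g4) n1 s12 s21 n2))
    | true => exact (lemSHAPEP G hcomp hkey true r1 r2 c1 c2 hr1 hr2 hc1 hc2 (Ne.symm g1) (Ne.symm g4) n1 s12 n2 s21)
  | true => cases s21 : G.sign r2 c1 with
    | false => exact (lemSHAPEP G hcomp hkey true r2 r1 c2 c1 hr2 hr1 hc2 hc1 g1 g4 n2 s21 n1 s12)
    | true =>
      obtain ⟨r3, c3, hr3, hc3, hadj3, n3, k1, k2, k3, k4⟩ := hkey true r1 c2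
        (by rw [hr1, hc2]; simp)
      by_cases h32 : r3 = r2
      · have n3' : G.sign r2 c3 = false := by rw [← h32]; exact n3
        have d31 : c3 ≠ c1 := by
          intro he; rw [he] at n3'; rw [n3'] at s21; exact Bool.false_ne_true s21
        exact lemSHAPEL G hcomp hkey true r1 r2 c1 c2 c3 hr1 hr2 hc1 hc2 hc3
          (Ne.symm g1) (Ne.symm g4) (Ne.symm d31) (Ne.symm k4) n1 n2 n3' s12 s21
      · by_cases h31 : c3 = c1
        · have n3' : G.sign r3 c1 = false := by rw [← h31]; exact n3
          exact lemSHAPEL G hcomp hkey (!true) c2 c1 r2 r1 r3 hc2 hc1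
            (side_nn G hr2) (side_nn G hr1) (side_nn G hr3)
            g4 g1 (Ne.symm h32) (Ne.symm k1)
            (sgf G n2) (sgf G n1) (sgf G n3') (sgt G s12) (sgt G s21)
        · exact lemMATCH3 G hcomp true r1 r2 r3 c1 c2 c3 hr1 hr2 hr3 hc1 hc2 hc3
            (Ne.symm g1) (Ne.symm k1) (Ne.symm h32)
            (Ne.symm g4) (Ne.symm h31) (Ne.symm k4) n1 n2 n3

end SBAux
open SignedBigraph
namespace SBAux
variable {V : Type u} (G : SignedBigraph V)

lemma not_chordal_M1 (hcomp : ∀ a b : V, G.side a ≠ G.side b → G.Adj a b) (h : G.HasM1) : ¬ G.IsChordal := by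
  obtain ⟨u1,u2,v1,v2, hdist, a00, a01, a10, a11, nu01, nw01, s00, s01, s10, s11⟩ := h
  simp only [List.pairwise_cons, List.mem_cons, List.mem_singleton, List.not_mem_nil, or_false,
    forall_eq_or_imp, forall_eq, false_implies, implies_true, and_true, List.Pairwise.nil] at hdist
  obtain ⟨⟨n01, n02, n03⟩, ⟨n12, n13⟩, n23⟩ := hdist
  apply not_chordal_of_bad G hcomp {u1, u2, v1, v2} ⟨u1, v1, by simp, by simp, a00⟩
  intro a b ha hb hab
  simp only [Set.mem_insert_iff, Set.mem_singleton_iff] at ha hb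
  rcases ha with rfl|rfl|rfl|rfl <;> rcases hb with rfl|rfl|rfl|rfl
  · exact absurd hab (G.graph.loopless.irrefl _)
  · exact absurd hab nu01
  · exact ⟨u2, v2, by simp, by simp, (n01).symm, n12, (n03).symm, (n23).symm, a11, s11⟩
  · exact ⟨u2, v1, by simp, by simp, (n01).symm, n13, (n02).symm, n23, a10, s10⟩
  · exact absurd hab.symm nu01
  · exact absurd hab (G.graph.loopless.irrefl _)
  · exact ⟨u1, v2, by simp, by simp, n01, n02, (n13).symm, (n23).symm, a01, s01⟩
  · exact ⟨u1, v1, by simp, by simp, n01, n03, (n12).symm, n23, a00, s00⟩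
  · exact ⟨u2, v2, by simp, by simp, n12, (n01).symm, (n23).symm, (n03).symm, a11, s11⟩
  · exact ⟨u1, v2, by simp, by simp, n02, n01, (n23).symm, (n13).symm, a01, s01⟩
  · exact absurd hab (G.graph.loopless.irrefl _)
  · exact absurd hab nw01
  · exact ⟨u2, v1, by simp, by simp, n13, (n01).symm, n23, (n02).symm, a10, s10⟩
  · exact ⟨u1, v1, by simp, by simp, n03, n01, n23, (n12).symm, a00, s00⟩
  · exact absurd hab.symm nw01
  · exact absurd hab (G.graph.loopless.irrefl _)

lemma not_chordal_M2 (hcomp : ∀ a b : V, G.side a ≠ G.side b → G.Adj a b) (h : G.HasM2) : ¬ G.IsChordal := by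
  obtain ⟨u1,u2,v1,v2,v3, hdist, a00, a01, a02, a10, a11, a12, nu01, nw01, nw02, nw12, s00, s01, s11, s12, s02, s10⟩ := h
  simp only [List.pairwise_cons, List.mem_cons, List.mem_singleton, List.not_mem_nil, or_false,
    forall_eq_or_imp, forall_eq, false_implies, implies_true, and_true, List.Pairwise.nil] at hdist
  obtain ⟨⟨n01, n02, n03, n04⟩, ⟨n12, n13, n14⟩, ⟨n23, n24⟩, n34⟩ := hdist
  apply not_chordal_of_bad G hcomp {u1, u2, v1, v2, v3} ⟨u1, v1, by simp, by simp, a00⟩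
  intro a b ha hb hab
  simp only [Set.mem_insert_iff, Set.mem_singleton_iff] at ha hb
  rcases ha with rfl|rfl|rfl|rfl|rfl <;> rcases hb with rfl|rfl|rfl|rfl|rfl
  · exact absurd hab (G.graph.loopless.irrefl _)
  · exact absurd hab nu01
  · exact ⟨u2, v3, by simp, by simp, (n01).symm, n12, (n04).symm, (n24).symm, a12, s12⟩
  · exact ⟨u2, v3, by simp, by simp, (n01).symm, n13, (n04).symm, (n34).symm, a12, s12⟩
  · exact ⟨u2, v2, by simp, by simp, (n01).symm, n14, (n03).symm, n34, a11, s11⟩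
  · exact absurd hab.symm nu01
  · exact absurd hab (G.graph.loopless.irrefl _)
  · exact ⟨u1, v2, by simp, by simp, n01, n02, (n13).symm, (n23).symm, a01, s01⟩
  · exact ⟨u1, v1, by simp, by simp, n01, n03, (n12).symm, n23, a00, s00⟩
  · exact ⟨u1, v1, by simp, by simp, n01, n04, (n12).symm, n24, a00, s00⟩
  · exact ⟨u2, v3, by simp, by simp, n12, (n01).symm, (n24).symm, (n04).symm, a12, s12⟩
  · exact ⟨u1, v2, by simp, by simp, n02, n01, (n23).symm, (n13).symm, a01, s01⟩
  · exact absurd hab (G.graph.loopless.irrefl _)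
  · exact absurd hab nw01
  · exact absurd hab nw02
  · exact ⟨u2, v3, by simp, by simp, n13, (n01).symm, (n34).symm, (n04).symm, a12, s12⟩
  · exact ⟨u1, v1, by simp, by simp, n03, n01, n23, (n12).symm, a00, s00⟩
  · exact absurd hab.symm nw01
  · exact absurd hab (G.graph.loopless.irrefl _)
  · exact absurd hab nw12
  · exact ⟨u2, v2, by simp, by simp, n14, (n01).symm, n34, (n03).symm, a11, s11⟩
  · exact ⟨u1, v1, by simp, by simp, n04, n01, n24, (n12).symm, a00, s00⟩
  · exact absurd hab.symm nw02
  · exact absurd hab.symm nw12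
  · exact absurd hab (G.graph.loopless.irrefl _)

lemma not_chordal_M3 (hcomp : ∀ a b : V, G.side a ≠ G.side b → G.Adj a b) (h : G.HasM3) : ¬ G.IsChordal := by
  obtain ⟨u1,u2,v1,v2,v3,v4, hdist, a00, a01, a02, a03, a10, a11, a12, a13, nu01, nw01, nw02, nw03, nw12, nw13, nw23, s00, s01, s12, s13, s02, s03, s10, s11⟩ := h
  simp only [List.pairwise_cons, List.mem_cons, List.mem_singleton, List.not_mem_nil, or_false,
    forall_eq_or_imp, forall_eq, false_implies, implies_true, and_true, List.Pairwise.nil] at hdist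
  obtain ⟨⟨n01, n02, n03, n04, n05⟩, ⟨n12, n13, n14, n15⟩, ⟨n23, n24, n25⟩, ⟨n34, n35⟩, n45⟩ := hdist
  apply not_chordal_of_bad G hcomp {u1, u2, v1, v2, v3, v4} ⟨u1, v1, by simp, by simp, a00⟩
  intro a b ha hb hab
  simp only [Set.mem_insert_iff, Set.mem_singleton_iff] at ha hb
  rcases ha with rfl|rfl|rfl|rfl|rfl|rfl <;> rcases hb with rfl|rfl|rfl|rfl|rfl|rfl
  · exact absurd hab (G.graph.loopless.irrefl _)
  · exact absurd hab nu01
  · exact ⟨u2, v3, by simp, by simp, (n01).symm, n12, (n04).symm, (n24).symm, a12, s12⟩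
  · exact ⟨u2, v3, by simp, by simp, (n01).symm, n13, (n04).symm, (n34).symm, a12, s12⟩
  · exact ⟨u2, v4, by simp, by simp, (n01).symm, n14, (n05).symm, (n45).symm, a13, s13⟩
  · exact ⟨u2, v3, by simp, by simp, (n01).symm, n15, (n04).symm, n45, a12, s12⟩
  · exact absurd hab.symm nu01
  · exact absurd hab (G.graph.loopless.irrefl _)
  · exact ⟨u1, v2, by simp, by simp, n01, n02, (n13).symm, (n23).symm, a01, s01⟩
  · exact ⟨u1, v1, by simp, by simp, n01, n03, (n12).symm, n23, a00, s00⟩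
  · exact ⟨u1, v1, by simp, by simp, n01, n04, (n12).symm, n24, a00, s00⟩
  · exact ⟨u1, v1, by simp, by simp, n01, n05, (n12).symm, n25, a00, s00⟩
  · exact ⟨u2, v3, by simp, by simp, n12, (n01).symm, (n24).symm, (n04).symm, a12, s12⟩
  · exact ⟨u1, v2, by simp, by simp, n02, n01, (n23).symm, (n13).symm, a01, s01⟩
  · exact absurd hab (G.graph.loopless.irrefl _)
  · exact absurd hab nw01
  · exact absurd hab nw02
  · exact absurd hab nw03
  · exact ⟨u2, v3, by simp, by simp, n13, (n01).symm, (n34).symm, (n04).symm, a12, s12⟩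
  · exact ⟨u1, v1, by simp, by simp, n03, n01, n23, (n12).symm, a00, s00⟩
  · exact absurd hab.symm nw01
  · exact absurd hab (G.graph.loopless.irrefl _)
  · exact absurd hab nw12
  · exact absurd hab nw13
  · exact ⟨u2, v4, by simp, by simp, n14, (n01).symm, (n45).symm, (n05).symm, a13, s13⟩
  · exact ⟨u1, v1, by simp, by simp, n04, n01, n24, (n12).symm, a00, s00⟩
  · exact absurd hab.symm nw02
  · exact absurd hab.symm nw12
  · exact absurd hab (G.graph.loopless.irrefl _)
  · exact absurd hab nw23
  · exact ⟨u2, v3, by simp, by simp, n15, (n01).symm, n45, (n04).symm, a12, s12⟩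
  · exact ⟨u1, v1, by simp, by simp, n05, n01, n25, (n12).symm, a00, s00⟩
  · exact absurd hab.symm nw03
  · exact absurd hab.symm nw13
  · exact absurd hab.symm nw23
  · exact absurd hab (G.graph.loopless.irrefl _)

lemma not_chordal_M4 (hcomp : ∀ a b : V, G.side a ≠ G.side b → G.Adj a b) (h : G.HasM4) : ¬ G.IsChordal := by
  obtain ⟨u1,u2,u3,v1,v2,v3, hdist, a00, a01, a02, a10, a11, a12, a20, a21, a22, nu01, nu02, nu12, nw01, nw02, nw12, s00, s11, s22, s01, s02, s10, s12, s20, s21⟩ := h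
  simp only [List.pairwise_cons, List.mem_cons, List.mem_singleton, List.not_mem_nil, or_false,
    forall_eq_or_imp, forall_eq, false_implies, implies_true, and_true, List.Pairwise.nil] at hdist
  obtain ⟨⟨n01, n02, n03, n04, n05⟩, ⟨n12, n13, n14, n15⟩, ⟨n23, n24, n25⟩, ⟨n34, n35⟩, n45⟩ := hdist
  apply not_chordal_of_bad G hcomp {u1, u2, u3, v1, v2, v3} ⟨u1, v1, by simp, by simp, a00⟩
  intro a b ha hb hab
  simp only [Set.mem_insert_iff, Set.mem_singleton_iff] at ha hb
  rcases ha with rfl|rfl|rfl|rfl|rfl|rfl <;> rcases hb with rfl|rfl|rfl|rfl|rfl|rfl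
  · exact absurd hab (G.graph.loopless.irrefl _)
  · exact absurd hab nu01
  · exact absurd hab nu02
  · exact ⟨u2, v2, by simp, by simp, (n01).symm, n13, (n04).symm, (n34).symm, a11, s11⟩
  · exact ⟨u3, v3, by simp, by simp, (n02).symm, n24, (n05).symm, (n45).symm, a22, s22⟩
  · exact ⟨u2, v2, by simp, by simp, (n01).symm, n15, (n04).symm, n45, a11, s11⟩
  · exact absurd hab.symm nu01
  · exact absurd hab (G.graph.loopless.irrefl _)
  · exact absurd hab nu12
  · exact ⟨u3, v3, by simp, by simp, (n12).symm, n23, (n15).symm, (n35).symm, a22, s22⟩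
  · exact ⟨u1, v1, by simp, by simp, n01, n04, (n13).symm, n34, a00, s00⟩
  · exact ⟨u1, v1, by simp, by simp, n01, n05, (n13).symm, n35, a00, s00⟩
  · exact absurd hab.symm nu02
  · exact absurd hab.symm nu12
  · exact absurd hab (G.graph.loopless.irrefl _)
  · exact ⟨u2, v2, by simp, by simp, n12, n13, (n24).symm, (n34).symm, a11, s11⟩
  · exact ⟨u1, v1, by simp, by simp, n02, n04, (n23).symm, n34, a00, s00⟩
  · exact ⟨u1, v1, by simp, by simp, n02, n05, (n23).symm, n35, a00, s00⟩
  · exact ⟨u2, v2, by simp, by simp, n13, (n01).symm, (n34).symm, (n04).symm, a11, s11⟩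
  · exact ⟨u3, v3, by simp, by simp, n23, (n12).symm, (n35).symm, (n15).symm, a22, s22⟩
  · exact ⟨u2, v2, by simp, by simp, n13, n12, (n34).symm, (n24).symm, a11, s11⟩
  · exact absurd hab (G.graph.loopless.irrefl _)
  · exact absurd hab nw01
  · exact absurd hab nw02
  · exact ⟨u3, v3, by simp, by simp, n24, (n02).symm, (n45).symm, (n05).symm, a22, s22⟩
  · exact ⟨u1, v1, by simp, by simp, n04, n01, n34, (n13).symm, a00, s00⟩
  · exact ⟨u1, v1, by simp, by simp, n04, n02, n34, (n23).symm, a00, s00⟩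
  · exact absurd hab.symm nw01
  · exact absurd hab (G.graph.loopless.irrefl _)
  · exact absurd hab nw12
  · exact ⟨u2, v2, by simp, by simp, n15, (n01).symm, n45, (n04).symm, a11, s11⟩
  · exact ⟨u1, v1, by simp, by simp, n05, n01, n35, (n13).symm, a00, s00⟩
  · exact ⟨u1, v1, by simp, by simp, n05, n02, n35, (n23).symm, a00, s00⟩
  · exact absurd hab.symm nw02
  · exact absurd hab.symm nw12
  · exact absurd hab (G.graph.loopless.irrefl _)

lemma not_chordal_M5 (hcomp : ∀ a b : V, G.side a ≠ G.side b → G.Adj a b) (h : G.HasM5) : ¬ G.IsChordal := by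
  obtain ⟨x1,x2,x3,y1,y2,y3, hdist, a00, a01, a02, a10, a11, a12, a20, a21, a22, nu01, nu02, nu12, nw01, nw02, nw12, s00, s01, s11, s22, s02, s10, s12, s20, s21⟩ := h
  simp only [List.pairwise_cons, List.mem_cons, List.mem_singleton, List.not_mem_nil, or_false,
    forall_eq_or_imp, forall_eq, false_implies, implies_true, and_true, List.Pairwise.nil] at hdist
  obtain ⟨⟨n01, n02, n03, n04, n05⟩, ⟨n12, n13, n14, n15⟩, ⟨n23, n24, n25⟩, ⟨n34, n35⟩, n45⟩ := hdist
  apply not_chordal_of_bad G hcomp {x1, x2, x3, y1, y2, y3} ⟨x1, y1, by simp, by simp, a00⟩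
  intro a b ha hb hab
  simp only [Set.mem_insert_iff, Set.mem_singleton_iff] at ha hb
  rcases ha with rfl|rfl|rfl|rfl|rfl|rfl <;> rcases hb with rfl|rfl|rfl|rfl|rfl|rfl
  · exact absurd hab (G.graph.loopless.irrefl _)
  · exact absurd hab nu01
  · exact absurd hab nu02
  · exact ⟨x2, y2, by simp, by simp, (n01).symm, n13, (n04).symm, (n34).symm, a11, s11⟩
  · exact ⟨x3, y3, by simp, by simp, (n02).symm, n24, (n05).symm, (n45).symm, a22, s22⟩
  · exact ⟨x2, y2, by simp, by simp, (n01).symm, n15, (n04).symm, n45, a11, s11⟩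
  · exact absurd hab.symm nu01
  · exact absurd hab (G.graph.loopless.irrefl _)
  · exact absurd hab nu12
  · exact ⟨x1, y2, by simp, by simp, n01, n03, (n14).symm, (n34).symm, a01, s01⟩
  · exact ⟨x3, y3, by simp, by simp, (n12).symm, n24, (n15).symm, (n45).symm, a22, s22⟩
  · exact ⟨x1, y1, by simp, by simp, n01, n05, (n13).symm, n35, a00, s00⟩
  · exact absurd hab.symm nu02
  · exact absurd hab.symm nu12
  · exact absurd hab (G.graph.loopless.irrefl _)
  · exact ⟨x1, y2, by simp, by simp, n02, n03, (n24).symm, (n34).symm, a01, s01⟩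
  · exact ⟨x1, y1, by simp, by simp, n02, n04, (n23).symm, n34, a00, s00⟩
  · exact ⟨x1, y2, by simp, by simp, n02, n05, (n24).symm, n45, a01, s01⟩
  · exact ⟨x2, y2, by simp, by simp, n13, (n01).symm, (n34).symm, (n04).symm, a11, s11⟩
  · exact ⟨x1, y2, by simp, by simp, n03, n01, (n34).symm, (n14).symm, a01, s01⟩
  · exact ⟨x1, y2, by simp, by simp, n03, n02, (n34).symm, (n24).symm, a01, s01⟩
  · exact absurd hab (G.graph.loopless.irrefl _)
  · exact absurd hab nw01
  · exact absurd hab nw02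
  · exact ⟨x3, y3, by simp, by simp, n24, (n02).symm, (n45).symm, (n05).symm, a22, s22⟩
  · exact ⟨x3, y3, by simp, by simp, n24, (n12).symm, (n45).symm, (n15).symm, a22, s22⟩
  · exact ⟨x1, y1, by simp, by simp, n04, n02, n34, (n23).symm, a00, s00⟩
  · exact absurd hab.symm nw01
  · exact absurd hab (G.graph.loopless.irrefl _)
  · exact absurd hab nw12
  · exact ⟨x2, y2, by simp, by simp, n15, (n01).symm, n45, (n04).symm, a11, s11⟩
  · exact ⟨x1, y1, by simp, by simp, n05, n01, n35, (n13).symm, a00, s00⟩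
  · exact ⟨x1, y2, by simp, by simp, n05, n02, n45, (n24).symm, a01, s01⟩
  · exact absurd hab.symm nw02
  · exact absurd hab.symm nw12
  · exact absurd hab (G.graph.loopless.irrefl _)

end SBAux
open SignedBigraph in
/-- Theorem 2.3: a signed complete bigraph is chordal iff it
contains none of `M₁, …, M₅` as an induced subgraph. -/
theorem signedCompleteBigraph_isChordal_iff_M
    {V : Type u} [Fintype V] (G : SignedBigraph V)
    (hcomp : ∀ a b : V, G.side a ≠ G.side b → G.Adj a b) :
    G.IsChordal ↔ ¬ (G.HasM1 ∨ G.HasM2 ∨ G.HasM3 ∨ G.HasM4 ∨ G.HasM5) := by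
  constructor
  · intro hch hM
    rcases hM with h | h | h | h | h
    · exact SBAux.not_chordal_M1 G hcomp h hch
    · exact SBAux.not_chordal_M2 G hcomp h hch
    · exact SBAux.not_chordal_M3 G hcomp h hch
    · exact SBAux.not_chordal_M4 G hcomp h hch
    · exact SBAux.not_chordal_M5 G hcomp h hch
  · intro hM
    by_cases hedge : ∃ u v : V, G.Adj u v
    · obtain ⟨u0, v0, h0⟩ := hedge
      obtain ⟨r, c, hr, hc, hcov⟩ := SBAux.cover_exists G hcomp hM u0 v0 h0
      exact SBAux.chordal_of_cover G hcomp r c hr hc hcov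
    · push_neg at hedge
      exact SBAux.chordal_of_no_edges G hedge
end

section
/- Each of the five signed graphs M_1, M_2, M_3, M_4, M_5 is not a chordal signed bigraph, yet deleting any single vertex from any of them yields a chordal signed bigraph; moreover, every signed graph in F_1 ∪ F_2 ∪ F_3 ∪ F_4 contains one of M_1,…,M_5 as an induced subgraph. -/
universe u

/-! ## Auxiliary lemmas -/

namespace SignedBigraph

variable {V : Type u}

lemma adj_symm' {G : SignedBigraph V} {a b : V} (h : G.Adj a b) : G.Adj b a :=
  SimpleGraph.Adj.symm h

lemma not_adj_symm' {G : SignedBigraph V} {a b : V} (h : ¬ G.Adj a b) : ¬ G.Adj b a :=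
  fun h' => h (adj_symm' h')

lemma sign_symm' {G : SignedBigraph V} {a b : V} {x : Bool} (h : G.sign a b = x) :
    G.sign b a = x := (G.sign_symm b a).trans h

instance instDecAdj (G : SignedBigraph V) [h : DecidableRel G.graph.Adj] :
    DecidableRel G.Adj := h

instance instDecSS [Fintype V] [DecidableEq V] (G : SignedBigraph V)
    [DecidableRel G.graph.Adj] (a b : V) : Decidable (G.SignedSimplicial a b) :=
  decidable_of_iff (G.graph.Adj a b ∧ ∀ c,
      ((G.graph.Adj a c ∨ G.graph.Adj b c) ∧ ¬(c = a ∨ c = b)) → ∀ d,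
      ((G.graph.Adj a d ∨ G.graph.Adj b d) ∧ ¬(d = a ∨ d = b)) →
      G.side c ≠ G.side d → G.graph.Adj c d ∧ G.sign c d = true) (by
    simp only [SignedSimplicial, SignedBigraph.Adj, edgeNbhd, Set.mem_diff,
      Set.mem_union, SimpleGraph.mem_neighborSet, Set.mem_insert_iff,
      Set.mem_singleton_iff]
    )

instance instDecInduce (G : SignedBigraph V) [h : DecidableRel G.graph.Adj] (A : Set V) :
    DecidableRel (G.induce A).graph.Adj := fun u v => h u.1 v.1

instance instDecDel [DecidableEq V] (G : SignedBigraph V) [DecidableRel G.graph.Adj]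
    (l : List (Sym2 V)) : DecidableRel (G.deleteEdges {e | e ∈ l}).graph.Adj :=
  fun u v => decidable_of_iff (G.graph.Adj u v ∧ s(u,v) ∉ l) (by
    simp [SignedBigraph.deleteEdges, SimpleGraph.deleteEdges_adj, Set.mem_setOf_eq])

lemma deleteEdges_nilset (G : SignedBigraph V) :
    G.deleteEdges {e | e ∈ ([] : List (Sym2 V))} = G := by
  have h : {e : Sym2 V | e ∈ ([] : List (Sym2 V))} = ∅ := by simp
  rw [h]
  cases G
  simp [SignedBigraph.deleteEdges, SimpleGraph.deleteEdges_empty]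

lemma not_isChordal (G : SignedBigraph V) (a0 b0 : V) (hab : G.graph.Adj a0 b0)
    (h : ∀ a b, ¬ G.SignedSimplicial a b) : ¬ G.IsChordal := by
  rintro ⟨l, -, hmem, hs⟩
  have hlen : 0 < l.length := by
    have : s(a0, b0) ∈ l := (hmem _).mp ((SimpleGraph.mem_edgeSet _).mpr hab)
    exact List.length_pos_iff.mpr (List.ne_nil_of_mem this)
  obtain ⟨a, b, -, hss⟩ := hs 0 hlen
  rw [List.take_zero, deleteEdges_nilset] at hss
  exact h a b hss

theorem isChordal_of_list (G : SignedBigraph V) (l : List (Sym2 V))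
    (h1 : l.Nodup) (h2 : ∀ e, e ∈ G.graph.edgeSet ↔ e ∈ l)
    (h3 : ∀ i : Fin l.length, ∃ a b : V,
      l.get i = s(a, b) ∧
      (G.deleteEdges {e | e ∈ l.take i.1}).SignedSimplicial a b) : G.IsChordal :=
  ⟨l, h1, h2, fun i h => h3 ⟨i, h⟩⟩

end SignedBigraph

instance : DecidableRel Mgraph1.graph.Adj :=
  fun u v => inferInstanceAs (Decidable (u.isLeft ≠ v.isLeft))
instance : DecidableRel Mgraph2.graph.Adj :=
  fun u v => inferInstanceAs (Decidable (u.isLeft ≠ v.isLeft))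
instance : DecidableRel Mgraph3.graph.Adj :=
  fun u v => inferInstanceAs (Decidable (u.isLeft ≠ v.isLeft))
instance : DecidableRel Mgraph4.graph.Adj :=
  fun u v => inferInstanceAs (Decidable (u.isLeft ≠ v.isLeft))
instance : DecidableRel Mgraph5.graph.Adj :=
  fun u v => inferInstanceAs (Decidable (u.isLeft ≠ v.isLeft))


section PW
variable {α : Type u} {a b c d e f : α}

lemma pw4 (h1 : a ≠ b) (h2 : a ≠ c) (h3 : a ≠ d) (h4 : b ≠ c) (h5 : b ≠ d)
    (h6 : c ≠ d) : [a, b, c, d].Pairwise (· ≠ ·) := by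
  simp_all [List.pairwise_cons]

lemma pw5 (h1 : a ≠ b) (h2 : a ≠ c) (h3 : a ≠ d) (h4 : a ≠ e) (h5 : b ≠ c)
    (h6 : b ≠ d) (h7 : b ≠ e) (h8 : c ≠ d) (h9 : c ≠ e) (h10 : d ≠ e) :
    [a, b, c, d, e].Pairwise (· ≠ ·) := by
  simp_all [List.pairwise_cons]

lemma pw6 (h1 : a ≠ b) (h2 : a ≠ c) (h3 : a ≠ d) (h4 : a ≠ e) (h5 : a ≠ f)
    (h6 : b ≠ c) (h7 : b ≠ d) (h8 : b ≠ e) (h9 : b ≠ f) (h10 : c ≠ d)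
    (h11 : c ≠ e) (h12 : c ≠ f) (h13 : d ≠ e) (h14 : d ≠ f) (h15 : e ≠ f) :
    [a, b, c, d, e, f].Pairwise (· ≠ ·) := by
  simp_all [List.pairwise_cons]

lemma pw5_iff (h : [a, b, c, d, e].Pairwise (· ≠ ·)) :
    a ≠ b ∧ a ≠ c ∧ a ≠ d ∧ a ≠ e ∧ b ≠ c ∧ b ≠ d ∧ b ≠ e ∧ c ≠ d ∧ c ≠ e ∧ d ≠ e := by
  simp [List.pairwise_cons] at h
  tauto

lemma pw6_iff (h : [a, b, c, d, e, f].Pairwise (· ≠ ·)) :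
    a ≠ b ∧ a ≠ c ∧ a ≠ d ∧ a ≠ e ∧ a ≠ f ∧ b ≠ c ∧ b ≠ d ∧ b ≠ e ∧ b ≠ f ∧
    c ≠ d ∧ c ≠ e ∧ c ≠ f ∧ d ≠ e ∧ d ≠ f ∧ e ≠ f := by
  simp [List.pairwise_cons] at h
  tauto

end PW
open SignedBigraph in
/-- each of `M₁, …, M₅` is not chordal, deleting any single vertex
from any of them yields a chordal signed bigraph, and every member of
`F₁ ∪ F₂ ∪ F₃ ∪ F₄` contains one of `M₁, …, M₅` as an induced subgraph. -/
theorem Mgraphs_minimal_nonchordal :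
    (¬ Mgraph1.IsChordal ∧ ¬ Mgraph2.IsChordal ∧ ¬ Mgraph3.IsChordal ∧
      ¬ Mgraph4.IsChordal ∧ ¬ Mgraph5.IsChordal) ∧
    ((∀ v, (Mgraph1.induce {u | u ≠ v}).IsChordal) ∧
      (∀ v, (Mgraph2.induce {u | u ≠ v}).IsChordal) ∧
      (∀ v, (Mgraph3.induce {u | u ≠ v}).IsChordal) ∧
      (∀ v, (Mgraph4.induce {u | u ≠ v}).IsChordal) ∧
      (∀ v, (Mgraph5.induce {u | u ≠ v}).IsChordal)) ∧
    (∀ (V : Type u) (G : SignedBigraph V),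
      (G.HasF1 ∨ G.HasF2 ∨ G.HasF3 ∨ G.HasF4) →
      (G.HasM1 ∨ G.HasM2 ∨ G.HasM3 ∨ G.HasM4 ∨ G.HasM5)) := by
  refine ⟨⟨?_, ?_, ?_, ?_, ?_⟩, ⟨?_, ?_, ?_, ?_, ?_⟩, ?_⟩
  · exact SignedBigraph.not_isChordal _ (Sum.inl 0) (Sum.inr 0) (by decide) (by decide)
  · exact SignedBigraph.not_isChordal _ (Sum.inl 0) (Sum.inr 0) (by decide) (by decide)
  · exact SignedBigraph.not_isChordal _ (Sum.inl 0) (Sum.inr 0) (by decide) (by decide)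
  · exact SignedBigraph.not_isChordal _ (Sum.inl 0) (Sum.inr 0) (by decide) (by decide)
  · exact SignedBigraph.not_isChordal _ (Sum.inl 0) (Sum.inr 0) (by decide) (by decide)
  · intro v
    rcases v with i | i <;> fin_cases i
    · exact SignedBigraph.isChordal_of_list _
          [s(⟨Sum.inl 1, by decide⟩, ⟨Sum.inr 0, by decide⟩),
           s(⟨Sum.inl 1, by decide⟩, ⟨Sum.inr 1, by decide⟩)]
          (by decide) (by decide) (by decide)
    · exact SignedBigraph.isChordal_of_list _
          [s(⟨Sum.inl 0, by decide⟩, ⟨Sum.inr 1, by decide⟩),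
           s(⟨Sum.inl 0, by decide⟩, ⟨Sum.inr 0, by decide⟩)]
          (by decide) (by decide) (by decide)
    · exact SignedBigraph.isChordal_of_list _
          [s(⟨Sum.inl 0, by decide⟩, ⟨Sum.inr 1, by decide⟩),
           s(⟨Sum.inl 1, by decide⟩, ⟨Sum.inr 1, by decide⟩)]
          (by decide) (by decide) (by decide)
    · exact SignedBigraph.isChordal_of_list _
          [s(⟨Sum.inl 1, by decide⟩, ⟨Sum.inr 0, by decide⟩),
           s(⟨Sum.inl 0, by decide⟩, ⟨Sum.inr 0, by decide⟩)]
          (by decide) (by decide) (by decide)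
  · intro v
    rcases v with i | i <;> fin_cases i
    · exact SignedBigraph.isChordal_of_list _
          [s(⟨Sum.inl 1, by decide⟩, ⟨Sum.inr 0, by decide⟩),
           s(⟨Sum.inl 1, by decide⟩, ⟨Sum.inr 2, by decide⟩),
           s(⟨Sum.inl 1, by decide⟩, ⟨Sum.inr 1, by decide⟩)]
          (by decide) (by decide) (by decide)
    · exact SignedBigraph.isChordal_of_list _
          [s(⟨Sum.inl 0, by decide⟩, ⟨Sum.inr 2, by decide⟩),
           s(⟨Sum.inl 0, by decide⟩, ⟨Sum.inr 1, by decide⟩),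
           s(⟨Sum.inl 0, by decide⟩, ⟨Sum.inr 0, by decide⟩)]
          (by decide) (by decide) (by decide)
    · exact SignedBigraph.isChordal_of_list _
          [s(⟨Sum.inl 1, by decide⟩, ⟨Sum.inr 1, by decide⟩),
           s(⟨Sum.inl 1, by decide⟩, ⟨Sum.inr 2, by decide⟩),
           s(⟨Sum.inl 0, by decide⟩, ⟨Sum.inr 1, by decide⟩),
           s(⟨Sum.inl 0, by decide⟩, ⟨Sum.inr 2, by decide⟩)]
          (by decide) (by decide) (by decide)
    · exact SignedBigraph.isChordal_of_list _
          [s(⟨Sum.inl 1, by decide⟩, ⟨Sum.inr 0, by decide⟩),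
           s(⟨Sum.inl 0, by decide⟩, ⟨Sum.inr 0, by decide⟩),
           s(⟨Sum.inl 0, by decide⟩, ⟨Sum.inr 2, by decide⟩),
           s(⟨Sum.inl 1, by decide⟩, ⟨Sum.inr 2, by decide⟩)]
          (by decide) (by decide) (by decide)
    · exact SignedBigraph.isChordal_of_list _
          [s(⟨Sum.inl 0, by decide⟩, ⟨Sum.inr 1, by decide⟩),
           s(⟨Sum.inl 0, by decide⟩, ⟨Sum.inr 0, by decide⟩),
           s(⟨Sum.inl 1, by decide⟩, ⟨Sum.inr 0, by decide⟩),
           s(⟨Sum.inl 1, by decide⟩, ⟨Sum.inr 1, by decide⟩)]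
          (by decide) (by decide) (by decide)
  · intro v
    rcases v with i | i <;> fin_cases i
    · exact SignedBigraph.isChordal_of_list _
          [s(⟨Sum.inl 1, by decide⟩, ⟨Sum.inr 3, by decide⟩),
           s(⟨Sum.inl 1, by decide⟩, ⟨Sum.inr 0, by decide⟩),
           s(⟨Sum.inl 1, by decide⟩, ⟨Sum.inr 2, by decide⟩),
           s(⟨Sum.inl 1, by decide⟩, ⟨Sum.inr 1, by decide⟩)]
          (by decide) (by decide) (by decide)
    · exact SignedBigraph.isChordal_of_list _
          [s(⟨Sum.inl 0, by decide⟩, ⟨Sum.inr 2, by decide⟩),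
           s(⟨Sum.inl 0, by decide⟩, ⟨Sum.inr 1, by decide⟩),
           s(⟨Sum.inl 0, by decide⟩, ⟨Sum.inr 3, by decide⟩),
           s(⟨Sum.inl 0, by decide⟩, ⟨Sum.inr 0, by decide⟩)]
          (by decide) (by decide) (by decide)
    · exact SignedBigraph.isChordal_of_list _
          [s(⟨Sum.inl 1, by decide⟩, ⟨Sum.inr 1, by decide⟩),
           s(⟨Sum.inl 1, by decide⟩, ⟨Sum.inr 3, by decide⟩),
           s(⟨Sum.inl 1, by decide⟩, ⟨Sum.inr 2, by decide⟩),
           s(⟨Sum.inl 0, by decide⟩, ⟨Sum.inr 1, by decide⟩),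
           s(⟨Sum.inl 0, by decide⟩, ⟨Sum.inr 2, by decide⟩),
           s(⟨Sum.inl 0, by decide⟩, ⟨Sum.inr 3, by decide⟩)]
          (by decide) (by decide) (by decide)
    · exact SignedBigraph.isChordal_of_list _
          [s(⟨Sum.inl 1, by decide⟩, ⟨Sum.inr 0, by decide⟩),
           s(⟨Sum.inl 0, by decide⟩, ⟨Sum.inr 0, by decide⟩),
           s(⟨Sum.inl 1, by decide⟩, ⟨Sum.inr 3, by decide⟩),
           s(⟨Sum.inl 1, by decide⟩, ⟨Sum.inr 2, by decide⟩),
           s(⟨Sum.inl 0, by decide⟩, ⟨Sum.inr 2, by decide⟩),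
           s(⟨Sum.inl 0, by decide⟩, ⟨Sum.inr 3, by decide⟩)]
          (by decide) (by decide) (by decide)
    · exact SignedBigraph.isChordal_of_list _
          [s(⟨Sum.inl 0, by decide⟩, ⟨Sum.inr 3, by decide⟩),
           s(⟨Sum.inl 0, by decide⟩, ⟨Sum.inr 0, by decide⟩),
           s(⟨Sum.inl 1, by decide⟩, ⟨Sum.inr 3, by decide⟩),
           s(⟨Sum.inl 0, by decide⟩, ⟨Sum.inr 1, by decide⟩),
           s(⟨Sum.inl 1, by decide⟩, ⟨Sum.inr 0, by decide⟩),
           s(⟨Sum.inl 1, by decide⟩, ⟨Sum.inr 1, by decide⟩)]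
          (by decide) (by decide) (by decide)
    · exact SignedBigraph.isChordal_of_list _
          [s(⟨Sum.inl 0, by decide⟩, ⟨Sum.inr 2, by decide⟩),
           s(⟨Sum.inl 0, by decide⟩, ⟨Sum.inr 0, by decide⟩),
           s(⟨Sum.inl 1, by decide⟩, ⟨Sum.inr 2, by decide⟩),
           s(⟨Sum.inl 0, by decide⟩, ⟨Sum.inr 1, by decide⟩),
           s(⟨Sum.inl 1, by decide⟩, ⟨Sum.inr 0, by decide⟩),
           s(⟨Sum.inl 1, by decide⟩, ⟨Sum.inr 1, by decide⟩)]
          (by decide) (by decide) (by decide)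
  · intro v
    rcases v with i | i <;> fin_cases i
    · exact SignedBigraph.isChordal_of_list _
          [s(⟨Sum.inl 2, by decide⟩, ⟨Sum.inr 1, by decide⟩),
           s(⟨Sum.inl 2, by decide⟩, ⟨Sum.inr 2, by decide⟩),
           s(⟨Sum.inl 1, by decide⟩, ⟨Sum.inr 2, by decide⟩),
           s(⟨Sum.inl 2, by decide⟩, ⟨Sum.inr 0, by decide⟩),
           s(⟨Sum.inl 1, by decide⟩, ⟨Sum.inr 0, by decide⟩),
           s(⟨Sum.inl 1, by decide⟩, ⟨Sum.inr 1, by decide⟩)]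
          (by decide) (by decide) (by decide)
    · exact SignedBigraph.isChordal_of_list _
          [s(⟨Sum.inl 0, by decide⟩, ⟨Sum.inr 2, by decide⟩),
           s(⟨Sum.inl 2, by decide⟩, ⟨Sum.inr 2, by decide⟩),
           s(⟨Sum.inl 0, by decide⟩, ⟨Sum.inr 0, by decide⟩),
           s(⟨Sum.inl 0, by decide⟩, ⟨Sum.inr 1, by decide⟩),
           s(⟨Sum.inl 2, by decide⟩, ⟨Sum.inr 1, by decide⟩),
           s(⟨Sum.inl 2, by decide⟩, ⟨Sum.inr 0, by decide⟩)]
          (by decide) (by decide) (by decide)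
    · exact SignedBigraph.isChordal_of_list _
          [s(⟨Sum.inl 0, by decide⟩, ⟨Sum.inr 1, by decide⟩),
           s(⟨Sum.inl 0, by decide⟩, ⟨Sum.inr 0, by decide⟩),
           s(⟨Sum.inl 0, by decide⟩, ⟨Sum.inr 2, by decide⟩),
           s(⟨Sum.inl 1, by decide⟩, ⟨Sum.inr 2, by decide⟩),
           s(⟨Sum.inl 1, by decide⟩, ⟨Sum.inr 0, by decide⟩),
           s(⟨Sum.inl 1, by decide⟩, ⟨Sum.inr 1, by decide⟩)]
          (by decide) (by decide) (by decide)
    · exact SignedBigraph.isChordal_of_list _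
          [s(⟨Sum.inl 2, by decide⟩, ⟨Sum.inr 1, by decide⟩),
           s(⟨Sum.inl 2, by decide⟩, ⟨Sum.inr 2, by decide⟩),
           s(⟨Sum.inl 1, by decide⟩, ⟨Sum.inr 2, by decide⟩),
           s(⟨Sum.inl 0, by decide⟩, ⟨Sum.inr 2, by decide⟩),
           s(⟨Sum.inl 0, by decide⟩, ⟨Sum.inr 1, by decide⟩),
           s(⟨Sum.inl 1, by decide⟩, ⟨Sum.inr 1, by decide⟩)]
          (by decide) (by decide) (by decide)
    · exact SignedBigraph.isChordal_of_list _
          [s(⟨Sum.inl 0, by decide⟩, ⟨Sum.inr 2, by decide⟩),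
           s(⟨Sum.inl 2, by decide⟩, ⟨Sum.inr 2, by decide⟩),
           s(⟨Sum.inl 0, by decide⟩, ⟨Sum.inr 0, by decide⟩),
           s(⟨Sum.inl 1, by decide⟩, ⟨Sum.inr 2, by decide⟩),
           s(⟨Sum.inl 1, by decide⟩, ⟨Sum.inr 0, by decide⟩),
           s(⟨Sum.inl 2, by decide⟩, ⟨Sum.inr 0, by decide⟩)]
          (by decide) (by decide) (by decide)
    · exact SignedBigraph.isChordal_of_list _
          [s(⟨Sum.inl 0, by decide⟩, ⟨Sum.inr 1, by decide⟩),
           s(⟨Sum.inl 2, by decide⟩, ⟨Sum.inr 1, by decide⟩),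
           s(⟨Sum.inl 0, by decide⟩, ⟨Sum.inr 0, by decide⟩),
           s(⟨Sum.inl 2, by decide⟩, ⟨Sum.inr 0, by decide⟩),
           s(⟨Sum.inl 1, by decide⟩, ⟨Sum.inr 0, by decide⟩),
           s(⟨Sum.inl 1, by decide⟩, ⟨Sum.inr 1, by decide⟩)]
          (by decide) (by decide) (by decide)
  · intro v
    rcases v with i | i <;> fin_cases i
    · exact SignedBigraph.isChordal_of_list _
          [s(⟨Sum.inl 2, by decide⟩, ⟨Sum.inr 1, by decide⟩),
           s(⟨Sum.inl 2, by decide⟩, ⟨Sum.inr 2, by decide⟩),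
           s(⟨Sum.inl 1, by decide⟩, ⟨Sum.inr 2, by decide⟩),
           s(⟨Sum.inl 2, by decide⟩, ⟨Sum.inr 0, by decide⟩),
           s(⟨Sum.inl 1, by decide⟩, ⟨Sum.inr 0, by decide⟩),
           s(⟨Sum.inl 1, by decide⟩, ⟨Sum.inr 1, by decide⟩)]
          (by decide) (by decide) (by decide)
    · exact SignedBigraph.isChordal_of_list _
          [s(⟨Sum.inl 0, by decide⟩, ⟨Sum.inr 2, by decide⟩),
           s(⟨Sum.inl 2, by decide⟩, ⟨Sum.inr 2, by decide⟩),
           s(⟨Sum.inl 0, by decide⟩, ⟨Sum.inr 0, by decide⟩),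
           s(⟨Sum.inl 0, by decide⟩, ⟨Sum.inr 1, by decide⟩),
           s(⟨Sum.inl 2, by decide⟩, ⟨Sum.inr 1, by decide⟩),
           s(⟨Sum.inl 2, by decide⟩, ⟨Sum.inr 0, by decide⟩)]
          (by decide) (by decide) (by decide)
    · exact SignedBigraph.isChordal_of_list _
          [s(⟨Sum.inl 0, by decide⟩, ⟨Sum.inr 1, by decide⟩),
           s(⟨Sum.inl 0, by decide⟩, ⟨Sum.inr 0, by decide⟩),
           s(⟨Sum.inl 0, by decide⟩, ⟨Sum.inr 2, by decide⟩),
           s(⟨Sum.inl 1, by decide⟩, ⟨Sum.inr 2, by decide⟩),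
           s(⟨Sum.inl 1, by decide⟩, ⟨Sum.inr 0, by decide⟩),
           s(⟨Sum.inl 1, by decide⟩, ⟨Sum.inr 1, by decide⟩)]
          (by decide) (by decide) (by decide)
    · exact SignedBigraph.isChordal_of_list _
          [s(⟨Sum.inl 2, by decide⟩, ⟨Sum.inr 1, by decide⟩),
           s(⟨Sum.inl 2, by decide⟩, ⟨Sum.inr 2, by decide⟩),
           s(⟨Sum.inl 0, by decide⟩, ⟨Sum.inr 1, by decide⟩),
           s(⟨Sum.inl 0, by decide⟩, ⟨Sum.inr 2, by decide⟩),
           s(⟨Sum.inl 1, by decide⟩, ⟨Sum.inr 2, by decide⟩),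
           s(⟨Sum.inl 1, by decide⟩, ⟨Sum.inr 1, by decide⟩)]
          (by decide) (by decide) (by decide)
    · exact SignedBigraph.isChordal_of_list _
          [s(⟨Sum.inl 0, by decide⟩, ⟨Sum.inr 2, by decide⟩),
           s(⟨Sum.inl 2, by decide⟩, ⟨Sum.inr 2, by decide⟩),
           s(⟨Sum.inl 0, by decide⟩, ⟨Sum.inr 0, by decide⟩),
           s(⟨Sum.inl 1, by decide⟩, ⟨Sum.inr 2, by decide⟩),
           s(⟨Sum.inl 1, by decide⟩, ⟨Sum.inr 0, by decide⟩),
           s(⟨Sum.inl 2, by decide⟩, ⟨Sum.inr 0, by decide⟩)]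
          (by decide) (by decide) (by decide)
    · exact SignedBigraph.isChordal_of_list _
          [s(⟨Sum.inl 0, by decide⟩, ⟨Sum.inr 1, by decide⟩),
           s(⟨Sum.inl 2, by decide⟩, ⟨Sum.inr 1, by decide⟩),
           s(⟨Sum.inl 0, by decide⟩, ⟨Sum.inr 0, by decide⟩),
           s(⟨Sum.inl 2, by decide⟩, ⟨Sum.inr 0, by decide⟩),
           s(⟨Sum.inl 1, by decide⟩, ⟨Sum.inr 0, by decide⟩),
           s(⟨Sum.inl 1, by decide⟩, ⟨Sum.inr 1, by decide⟩)]
          (by decide) (by decide) (by decide)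
  · intro V G h
    rcases h with h | h | h | h
    · exact Or.inl h
    · obtain ⟨u1, u2, v1, v2, v3, hd, a11, a12, a13, a21, a22, a23, nu12, nv12, nv13, nv23, sf1, sf2, sf3, sf4⟩ := h
      obtain ⟨d1, d2, d3, d4, d5, d6, d7, d8, d9, d10⟩ := pw5_iff hd
      cases c0 : G.sign u1 v3
      · cases c1 : G.sign u2 v1
        · exact Or.inl ⟨u1, u2, v1, v2, (pw4 d1 d2 d3 d5 d6 d8), a11, a12, a21, a22, nu12, nv12, sf1, sf2, c1, sf3⟩
        · exact Or.inl ⟨u1, u2, v2, v3, (pw4 d1 d3 d4 d6 d7 d10), a12, a13, a22, a23, nu12, nv23, sf2, c0, sf3, sf4⟩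
      · cases c1 : G.sign u2 v1
        · exact Or.inl ⟨u1, u2, v1, v2, (pw4 d1 d2 d3 d5 d6 d8), a11, a12, a21, a22, nu12, nv12, sf1, sf2, c1, sf3⟩
        · exact Or.inr (Or.inl ⟨u1, u2, v1, v2, v3, (pw5 d1 d2 d3 d4 d5 d6 d7 d8 d9 d10), a11, a12, a13, a21, a22, a23, nu12, nv12, nv13, nv23, sf1, sf2, sf3, sf4, c0, c1⟩)
    · obtain ⟨u1, u2, v1, v2, v3, v4, hd, a11, a12, a13, a14, a21, a22, a23, a24, nu12, nv12, nv13, nv14, nv23, nv24, nv34, sf1, sf2, sf3, sf4⟩ := h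
      obtain ⟨d1, d2, d3, d4, d5, d6, d7, d8, d9, d10, d11, d12, d13, d14, d15⟩ := pw6_iff hd
      cases c0 : G.sign u1 v3
      · cases c1 : G.sign u1 v4
        · cases c2 : G.sign u2 v1
          · cases c3 : G.sign u2 v2
            · exact Or.inl ⟨u1, u2, v1, v2, (pw4 d1 d2 d3 d6 d7 d10), a11, a12, a21, a22, nu12, nv12, sf1, sf2, c2, c3⟩
            · exact Or.inl ⟨u1, u2, v1, v3, (pw4 d1 d2 d4 d6 d8 d11), a11, a13, a21, a23, nu12, nv13, sf1, c0, c2, sf3⟩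
          · cases c3 : G.sign u2 v2
            · exact Or.inl ⟨u1, u2, v2, v3, (pw4 d1 d3 d4 d7 d8 d13), a12, a13, a22, a23, nu12, nv23, sf2, c0, c3, sf3⟩
            · exact Or.inl ⟨u1, u2, v3, v4, (pw4 d1 d4 d5 d8 d9 d15), a13, a14, a23, a24, nu12, nv34, c0, c1, sf3, sf4⟩
        · cases c2 : G.sign u2 v1
          · cases c3 : G.sign u2 v2
            · exact Or.inl ⟨u1, u2, v1, v2, (pw4 d1 d2 d3 d6 d7 d10), a11, a12, a21, a22, nu12, nv12, sf1, sf2, c2, c3⟩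
            · exact Or.inl ⟨u1, u2, v1, v3, (pw4 d1 d2 d4 d6 d8 d11), a11, a13, a21, a23, nu12, nv13, sf1, c0, c2, sf3⟩
          · cases c3 : G.sign u2 v2
            · exact Or.inl ⟨u1, u2, v2, v3, (pw4 d1 d3 d4 d7 d8 d13), a12, a13, a22, a23, nu12, nv23, sf2, c0, c3, sf3⟩
            · exact Or.inr (Or.inl ⟨u1, u2, v1, v3, v4, (pw5 d1 d2 d4 d5 d6 d8 d9 d11 d12 d15), a11, a13, a14, a21, a23, a24, nu12, nv13, nv14, nv34, sf1, c0, sf3, sf4, c1, c2⟩)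
      · cases c1 : G.sign u1 v4
        · cases c2 : G.sign u2 v1
          · cases c3 : G.sign u2 v2
            · exact Or.inl ⟨u1, u2, v1, v2, (pw4 d1 d2 d3 d6 d7 d10), a11, a12, a21, a22, nu12, nv12, sf1, sf2, c2, c3⟩
            · exact Or.inl ⟨u1, u2, v1, v4, (pw4 d1 d2 d5 d6 d9 d12), a11, a14, a21, a24, nu12, nv14, sf1, c1, c2, sf4⟩
          · cases c3 : G.sign u2 v2
            · exact Or.inl ⟨u1, u2, v2, v4, (pw4 d1 d3 d5 d7 d9 d14), a12, a14, a22, a24, nu12, nv24, sf2, c1, c3, sf4⟩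
            · exact Or.inr (Or.inl ⟨u1, u2, v1, v4, v3, (pw5 d1 d2 d5 d4 d6 d9 d8 d12 d11 d15.symm), a11, a14, a13, a21, a24, a23, nu12, nv14, nv13, (SignedBigraph.not_adj_symm' nv34), sf1, c1, sf4, sf3, c0, c2⟩)
        · cases c2 : G.sign u2 v1
          · cases c3 : G.sign u2 v2
            · exact Or.inl ⟨u1, u2, v1, v2, (pw4 d1 d2 d3 d6 d7 d10), a11, a12, a21, a22, nu12, nv12, sf1, sf2, c2, c3⟩
            · exact Or.inr (Or.inl ⟨u1, u2, v2, v1, v3, (pw5 d1 d3 d2 d4 d7 d6 d8 d10.symm d13 d11), a12, a11, a13, a22, a21, a23, nu12, (SignedBigraph.not_adj_symm' nv12), nv23, nv13, sf2, sf1, c2, sf3, c0, c3⟩)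
          · cases c3 : G.sign u2 v2
            · exact Or.inr (Or.inl ⟨u1, u2, v1, v2, v3, (pw5 d1 d2 d3 d4 d6 d7 d8 d10 d11 d13), a11, a12, a13, a21, a22, a23, nu12, nv12, nv13, nv23, sf1, sf2, c3, sf3, c0, c2⟩)
            · exact Or.inr (Or.inr (Or.inl ⟨u1, u2, v1, v2, v3, v4, (pw6 d1 d2 d3 d4 d5 d6 d7 d8 d9 d10 d11 d12 d13 d14 d15), a11, a12, a13, a14, a21, a22, a23, a24, nu12, nv12, nv13, nv14, nv23, nv24, nv34, sf1, sf2, sf3, sf4, c0, c1, c2, c3⟩))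
    · obtain ⟨u1, u2, u3, v1, v2, v3, hd, a11, a12, a13, a21, a22, a23, a31, a32, a33, nu12, nu13, nu23, nv12, nv13, nv23, sf1, sf2, sf3⟩ := h
      obtain ⟨d1, d2, d3, d4, d5, d6, d7, d8, d9, d10, d11, d12, d13, d14, d15⟩ := pw6_iff hd
      cases c0 : G.sign u1 v2
      · cases c1 : G.sign u1 v3
        · cases c2 : G.sign u2 v1
          · cases c3 : G.sign u2 v3
            · cases c4 : G.sign u3 v1
              · cases c5 : G.sign u3 v2
                · exact Or.inl ⟨u1, u2, v1, v2, (pw4 d1 d3 d4 d7 d8 d13), a11, a12, a21, a22, nu12, nv12, sf1, c0, c2, sf2⟩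
                · exact Or.inl ⟨u1, u2, v1, v2, (pw4 d1 d3 d4 d7 d8 d13), a11, a12, a21, a22, nu12, nv12, sf1, c0, c2, sf2⟩
              · cases c5 : G.sign u3 v2
                · exact Or.inl ⟨u1, u2, v1, v2, (pw4 d1 d3 d4 d7 d8 d13), a11, a12, a21, a22, nu12, nv12, sf1, c0, c2, sf2⟩
                · exact Or.inl ⟨u1, u2, v1, v2, (pw4 d1 d3 d4 d7 d8 d13), a11, a12, a21, a22, nu12, nv12, sf1, c0, c2, sf2⟩
            · cases c4 : G.sign u3 v1
              · cases c5 : G.sign u3 v2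
                · exact Or.inl ⟨u1, u2, v1, v2, (pw4 d1 d3 d4 d7 d8 d13), a11, a12, a21, a22, nu12, nv12, sf1, c0, c2, sf2⟩
                · exact Or.inl ⟨u1, u2, v1, v2, (pw4 d1 d3 d4 d7 d8 d13), a11, a12, a21, a22, nu12, nv12, sf1, c0, c2, sf2⟩
              · cases c5 : G.sign u3 v2
                · exact Or.inl ⟨u1, u2, v1, v2, (pw4 d1 d3 d4 d7 d8 d13), a11, a12, a21, a22, nu12, nv12, sf1, c0, c2, sf2⟩
                · exact Or.inl ⟨u1, u2, v1, v2, (pw4 d1 d3 d4 d7 d8 d13), a11, a12, a21, a22, nu12, nv12, sf1, c0, c2, sf2⟩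
          · cases c3 : G.sign u2 v3
            · cases c4 : G.sign u3 v1
              · cases c5 : G.sign u3 v2
                · exact Or.inl ⟨u1, u2, v2, v3, (pw4 d1 d4 d5 d8 d9 d15), a12, a13, a22, a23, nu12, nv23, c0, c1, sf2, c3⟩
                · exact Or.inl ⟨u1, u2, v2, v3, (pw4 d1 d4 d5 d8 d9 d15), a12, a13, a22, a23, nu12, nv23, c0, c1, sf2, c3⟩
              · cases c5 : G.sign u3 v2
                · exact Or.inl ⟨u1, u2, v2, v3, (pw4 d1 d4 d5 d8 d9 d15), a12, a13, a22, a23, nu12, nv23, c0, c1, sf2, c3⟩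
                · exact Or.inl ⟨u1, u2, v2, v3, (pw4 d1 d4 d5 d8 d9 d15), a12, a13, a22, a23, nu12, nv23, c0, c1, sf2, c3⟩
            · cases c4 : G.sign u3 v1
              · cases c5 : G.sign u3 v2
                · exact Or.inl ⟨u1, u3, v1, v2, (pw4 d2 d3 d4 d10 d11 d13), a11, a12, a31, a32, nu13, nv12, sf1, c0, c4, c5⟩
                · exact Or.inl ⟨u1, u3, v1, v3, (pw4 d2 d3 d5 d10 d12 d14), a11, a13, a31, a33, nu13, nv13, sf1, c1, c4, sf3⟩
              · cases c5 : G.sign u3 v2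
                · exact Or.inl ⟨u1, u3, v2, v3, (pw4 d2 d4 d5 d11 d12 d15), a12, a13, a32, a33, nu13, nv23, c0, c1, c5, sf3⟩
                · exact Or.inr (Or.inl ⟨v2, v3, u2, u1, u3, (pw5 d15 d8.symm d4.symm d11.symm d9.symm d5.symm d12.symm d1.symm d6 d2), (SignedBigraph.adj_symm' a22), (SignedBigraph.adj_symm' a12), (SignedBigraph.adj_symm' a32), (SignedBigraph.adj_symm' a23), (SignedBigraph.adj_symm' a13), (SignedBigraph.adj_symm' a33), nv23, (SignedBigraph.not_adj_symm' nu12), nu23, nu13, (SignedBigraph.sign_symm' sf2), (SignedBigraph.sign_symm' c0), (SignedBigraph.sign_symm' c1), (SignedBigraph.sign_symm' sf3), (SignedBigraph.sign_symm' c5), (SignedBigraph.sign_symm' c3)⟩)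
        · cases c2 : G.sign u2 v1
          · cases c3 : G.sign u2 v3
            · cases c4 : G.sign u3 v1
              · cases c5 : G.sign u3 v2
                · exact Or.inl ⟨u1, u2, v1, v2, (pw4 d1 d3 d4 d7 d8 d13), a11, a12, a21, a22, nu12, nv12, sf1, c0, c2, sf2⟩
                · exact Or.inl ⟨u1, u2, v1, v2, (pw4 d1 d3 d4 d7 d8 d13), a11, a12, a21, a22, nu12, nv12, sf1, c0, c2, sf2⟩
              · cases c5 : G.sign u3 v2
                · exact Or.inl ⟨u1, u2, v1, v2, (pw4 d1 d3 d4 d7 d8 d13), a11, a12, a21, a22, nu12, nv12, sf1, c0, c2, sf2⟩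
                · exact Or.inl ⟨u1, u2, v1, v2, (pw4 d1 d3 d4 d7 d8 d13), a11, a12, a21, a22, nu12, nv12, sf1, c0, c2, sf2⟩
            · cases c4 : G.sign u3 v1
              · cases c5 : G.sign u3 v2
                · exact Or.inl ⟨u1, u2, v1, v2, (pw4 d1 d3 d4 d7 d8 d13), a11, a12, a21, a22, nu12, nv12, sf1, c0, c2, sf2⟩
                · exact Or.inl ⟨u1, u2, v1, v2, (pw4 d1 d3 d4 d7 d8 d13), a11, a12, a21, a22, nu12, nv12, sf1, c0, c2, sf2⟩
              · cases c5 : G.sign u3 v2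
                · exact Or.inl ⟨u1, u2, v1, v2, (pw4 d1 d3 d4 d7 d8 d13), a11, a12, a21, a22, nu12, nv12, sf1, c0, c2, sf2⟩
                · exact Or.inl ⟨u1, u2, v1, v2, (pw4 d1 d3 d4 d7 d8 d13), a11, a12, a21, a22, nu12, nv12, sf1, c0, c2, sf2⟩
          · cases c3 : G.sign u2 v3
            · cases c4 : G.sign u3 v1
              · cases c5 : G.sign u3 v2
                · exact Or.inl ⟨u1, u3, v1, v2, (pw4 d2 d3 d4 d10 d11 d13), a11, a12, a31, a32, nu13, nv12, sf1, c0, c4, c5⟩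
                · exact Or.inr (Or.inl ⟨u1, u2, v1, v2, v3, (pw5 d1 d3 d4 d5 d7 d8 d9 d13 d14 d15), a11, a12, a13, a21, a22, a23, nu12, nv12, nv13, nv23, sf1, c0, sf2, c3, c1, c2⟩)
              · cases c5 : G.sign u3 v2
                · exact Or.inl ⟨u2, u3, v2, v3, (pw4 d6 d8 d9 d11 d12 d15), a22, a23, a32, a33, nu23, nv23, sf2, c3, c5, sf3⟩
                · exact Or.inr (Or.inl ⟨u1, u2, v1, v2, v3, (pw5 d1 d3 d4 d5 d7 d8 d9 d13 d14 d15), a11, a12, a13, a21, a22, a23, nu12, nv12, nv13, nv23, sf1, c0, sf2, c3, c1, c2⟩)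
            · cases c4 : G.sign u3 v1
              · cases c5 : G.sign u3 v2
                · exact Or.inl ⟨u1, u3, v1, v2, (pw4 d2 d3 d4 d10 d11 d13), a11, a12, a31, a32, nu13, nv12, sf1, c0, c4, c5⟩
                · exact Or.inr (Or.inl ⟨u1, u3, v2, v1, v3, (pw5 d2 d4 d3 d5 d11 d10 d12 d13.symm d15 d14), a12, a11, a13, a32, a31, a33, nu13, (SignedBigraph.not_adj_symm' nv12), nv23, nv13, c0, sf1, c4, sf3, c1, c5⟩)
              · cases c5 : G.sign u3 v2
                · exact Or.inr (Or.inl ⟨u1, u3, v1, v2, v3, (pw5 d2 d3 d4 d5 d10 d11 d12 d13 d14 d15), a11, a12, a13, a31, a32, a33, nu13, nv12, nv13, nv23, sf1, c0, c5, sf3, c1, c4⟩)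
                · exact Or.inr (Or.inr (Or.inr (Or.inr ⟨u1, u2, u3, v1, v2, v3, (pw6 d1 d2 d3 d4 d5 d6 d7 d8 d9 d10 d11 d12 d13 d14 d15), a11, a12, a13, a21, a22, a23, a31, a32, a33, nu12, nu13, nu23, nv12, nv13, nv23, sf1, c0, sf2, sf3, c1, c2, c3, c4, c5⟩)))
      · cases c1 : G.sign u1 v3
        · cases c2 : G.sign u2 v1
          · cases c3 : G.sign u2 v3
            · cases c4 : G.sign u3 v1
              · cases c5 : G.sign u3 v2
                · exact Or.inl ⟨u1, u2, v1, v3, (pw4 d1 d3 d5 d7 d9 d14), a11, a13, a21, a23, nu12, nv13, sf1, c1, c2, c3⟩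
                · exact Or.inl ⟨u1, u2, v1, v3, (pw4 d1 d3 d5 d7 d9 d14), a11, a13, a21, a23, nu12, nv13, sf1, c1, c2, c3⟩
              · cases c5 : G.sign u3 v2
                · exact Or.inl ⟨u1, u2, v1, v3, (pw4 d1 d3 d5 d7 d9 d14), a11, a13, a21, a23, nu12, nv13, sf1, c1, c2, c3⟩
                · exact Or.inl ⟨u1, u2, v1, v3, (pw4 d1 d3 d5 d7 d9 d14), a11, a13, a21, a23, nu12, nv13, sf1, c1, c2, c3⟩
            · cases c4 : G.sign u3 v1
              · cases c5 : G.sign u3 v2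
                · exact Or.inl ⟨u1, u3, v1, v3, (pw4 d2 d3 d5 d10 d12 d14), a11, a13, a31, a33, nu13, nv13, sf1, c1, c4, sf3⟩
                · exact Or.inl ⟨u1, u3, v1, v3, (pw4 d2 d3 d5 d10 d12 d14), a11, a13, a31, a33, nu13, nv13, sf1, c1, c4, sf3⟩
              · cases c5 : G.sign u3 v2
                · exact Or.inr (Or.inl ⟨u1, u2, v3, v1, v2, (pw5 d1 d5 d3 d4 d9 d7 d8 d14.symm d15.symm d13), a13, a11, a12, a23, a21, a22, nu12, (SignedBigraph.not_adj_symm' nv13), (SignedBigraph.not_adj_symm' nv23), nv12, c1, sf1, c2, sf2, c0, c3⟩)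
                · exact Or.inr (Or.inl ⟨u1, u2, v3, v1, v2, (pw5 d1 d5 d3 d4 d9 d7 d8 d14.symm d15.symm d13), a13, a11, a12, a23, a21, a22, nu12, (SignedBigraph.not_adj_symm' nv13), (SignedBigraph.not_adj_symm' nv23), nv12, c1, sf1, c2, sf2, c0, c3⟩)
          · cases c3 : G.sign u2 v3
            · cases c4 : G.sign u3 v1
              · cases c5 : G.sign u3 v2
                · exact Or.inl ⟨u1, u3, v1, v3, (pw4 d2 d3 d5 d10 d12 d14), a11, a13, a31, a33, nu13, nv13, sf1, c1, c4, sf3⟩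
                · exact Or.inl ⟨u1, u3, v1, v3, (pw4 d2 d3 d5 d10 d12 d14), a11, a13, a31, a33, nu13, nv13, sf1, c1, c4, sf3⟩
              · cases c5 : G.sign u3 v2
                · exact Or.inl ⟨u2, u3, v2, v3, (pw4 d6 d8 d9 d11 d12 d15), a22, a23, a32, a33, nu23, nv23, sf2, c3, c5, sf3⟩
                · exact Or.inr (Or.inl ⟨u1, u2, v1, v3, v2, (pw5 d1 d3 d5 d4 d7 d9 d8 d14 d13 d15.symm), a11, a13, a12, a21, a23, a22, nu12, nv13, nv12, (SignedBigraph.not_adj_symm' nv23), sf1, c1, c3, sf2, c0, c2⟩)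
            · cases c4 : G.sign u3 v1
              · cases c5 : G.sign u3 v2
                · exact Or.inl ⟨u1, u3, v1, v3, (pw4 d2 d3 d5 d10 d12 d14), a11, a13, a31, a33, nu13, nv13, sf1, c1, c4, sf3⟩
                · exact Or.inl ⟨u1, u3, v1, v3, (pw4 d2 d3 d5 d10 d12 d14), a11, a13, a31, a33, nu13, nv13, sf1, c1, c4, sf3⟩
              · cases c5 : G.sign u3 v2
                · exact Or.inr (Or.inl ⟨u1, u3, v1, v3, v2, (pw5 d2 d3 d5 d4 d10 d12 d11 d14 d13 d15.symm), a11, a13, a12, a31, a33, a32, nu13, nv13, nv12, (SignedBigraph.not_adj_symm' nv23), sf1, c1, sf3, c5, c0, c4⟩)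
                · exact Or.inr (Or.inr (Or.inr (Or.inr ⟨u1, u3, u2, v1, v3, v2, (pw6 d2 d1 d3 d5 d4 d6.symm d10 d12 d11 d7 d9 d8 d14 d13 d15.symm), a11, a13, a12, a31, a33, a32, a21, a23, a22, nu13, nu12, (SignedBigraph.not_adj_symm' nu23), nv13, nv12, (SignedBigraph.not_adj_symm' nv23), sf1, c1, sf3, sf2, c0, c4, c5, c2, c3⟩)))
        · cases c2 : G.sign u2 v1
          · cases c3 : G.sign u2 v3
            · cases c4 : G.sign u3 v1
              · cases c5 : G.sign u3 v2
                · exact Or.inl ⟨u2, u3, v1, v2, (pw4 d6 d7 d8 d10 d11 d13), a21, a22, a31, a32, nu23, nv12, c2, sf2, c4, c5⟩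
                · exact Or.inl ⟨u2, u3, v1, v3, (pw4 d6 d7 d9 d10 d12 d14), a21, a23, a31, a33, nu23, nv13, c2, c3, c4, sf3⟩
              · cases c5 : G.sign u3 v2
                · exact Or.inl ⟨u2, u3, v2, v3, (pw4 d6 d8 d9 d11 d12 d15), a22, a23, a32, a33, nu23, nv23, sf2, c3, c5, sf3⟩
                · exact Or.inr (Or.inl ⟨v1, v3, u1, u2, u3, (pw5 d14 d3.symm d7.symm d10.symm d5.symm d9.symm d12.symm d1 d2 d6), (SignedBigraph.adj_symm' a11), (SignedBigraph.adj_symm' a21), (SignedBigraph.adj_symm' a31), (SignedBigraph.adj_symm' a13), (SignedBigraph.adj_symm' a23), (SignedBigraph.adj_symm' a33), nv13, nu12, nu13, nu23, (SignedBigraph.sign_symm' sf1), (SignedBigraph.sign_symm' c2), (SignedBigraph.sign_symm' c3), (SignedBigraph.sign_symm' sf3), (SignedBigraph.sign_symm' c4), (SignedBigraph.sign_symm' c1)⟩)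
            · cases c4 : G.sign u3 v1
              · cases c5 : G.sign u3 v2
                · exact Or.inl ⟨u2, u3, v1, v2, (pw4 d6 d7 d8 d10 d11 d13), a21, a22, a31, a32, nu23, nv12, c2, sf2, c4, c5⟩
                · exact Or.inr (Or.inl ⟨u2, u3, v2, v1, v3, (pw5 d6 d8 d7 d9 d11 d10 d12 d13.symm d15 d14), a22, a21, a23, a32, a31, a33, nu23, (SignedBigraph.not_adj_symm' nv12), nv23, nv13, sf2, c2, c4, sf3, c3, c5⟩)
              · cases c5 : G.sign u3 v2
                · exact Or.inr (Or.inl ⟨u2, u3, v1, v2, v3, (pw5 d6 d7 d8 d9 d10 d11 d12 d13 d14 d15), a21, a22, a23, a31, a32, a33, nu23, nv12, nv13, nv23, c2, sf2, c5, sf3, c3, c4⟩)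
                · exact Or.inr (Or.inr (Or.inr (Or.inr ⟨u2, u1, u3, v2, v1, v3, (pw6 d1.symm d6 d8 d7 d9 d2 d4 d3 d5 d11 d10 d12 d13.symm d15 d14), a22, a21, a23, a12, a11, a13, a32, a31, a33, (SignedBigraph.not_adj_symm' nu12), nu23, nu13, (SignedBigraph.not_adj_symm' nv12), nv23, nv13, sf2, c2, sf1, sf3, c3, c0, c1, c5, c4⟩)))
          · cases c3 : G.sign u2 v3
            · cases c4 : G.sign u3 v1
              · cases c5 : G.sign u3 v2
                · exact Or.inl ⟨u2, u3, v2, v3, (pw4 d6 d8 d9 d11 d12 d15), a22, a23, a32, a33, nu23, nv23, sf2, c3, c5, sf3⟩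
                · exact Or.inr (Or.inl ⟨u2, u3, v2, v3, v1, (pw5 d6 d8 d9 d7 d11 d12 d10 d15 d13.symm d14.symm), a22, a23, a21, a32, a33, a31, nu23, nv23, (SignedBigraph.not_adj_symm' nv12), (SignedBigraph.not_adj_symm' nv13), sf2, c3, sf3, c4, c2, c5⟩)
              · cases c5 : G.sign u3 v2
                · exact Or.inl ⟨u2, u3, v2, v3, (pw4 d6 d8 d9 d11 d12 d15), a22, a23, a32, a33, nu23, nv23, sf2, c3, c5, sf3⟩
                · exact Or.inr (Or.inr (Or.inr (Or.inr ⟨u2, u3, u1, v2, v3, v1, (pw6 d6 d1.symm d8 d9 d7 d2.symm d11 d12 d10 d4 d5 d3 d15 d13.symm d14.symm), a22, a23, a21, a32, a33, a31, a12, a13, a11, nu23, (SignedBigraph.not_adj_symm' nu12), (SignedBigraph.not_adj_symm' nu13), nv23, (SignedBigraph.not_adj_symm' nv12), (SignedBigraph.not_adj_symm' nv13), sf2, c3, sf3, sf1, c2, c5, c4, c0, c1⟩)))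
            · cases c4 : G.sign u3 v1
              · cases c5 : G.sign u3 v2
                · exact Or.inr (Or.inl ⟨v1, v2, u1, u3, u2, (pw5 d13 d3.symm d10.symm d7.symm d4.symm d11.symm d8.symm d2 d1 d6.symm), (SignedBigraph.adj_symm' a11), (SignedBigraph.adj_symm' a31), (SignedBigraph.adj_symm' a21), (SignedBigraph.adj_symm' a12), (SignedBigraph.adj_symm' a32), (SignedBigraph.adj_symm' a22), nv12, nu13, nu12, (SignedBigraph.not_adj_symm' nu23), (SignedBigraph.sign_symm' sf1), (SignedBigraph.sign_symm' c4), (SignedBigraph.sign_symm' c5), (SignedBigraph.sign_symm' sf2), (SignedBigraph.sign_symm' c2), (SignedBigraph.sign_symm' c0)⟩)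
                · exact Or.inr (Or.inr (Or.inr (Or.inr ⟨u3, u1, u2, v3, v1, v2, (pw6 d2.symm d6.symm d12 d10 d11 d1 d5 d3 d4 d9 d7 d8 d14.symm d15.symm d13), a33, a31, a32, a13, a11, a12, a23, a21, a22, (SignedBigraph.not_adj_symm' nu13), (SignedBigraph.not_adj_symm' nu23), nu12, (SignedBigraph.not_adj_symm' nv13), (SignedBigraph.not_adj_symm' nv23), nv12, sf3, c4, sf1, sf2, c5, c1, c0, c3, c2⟩)))
              · cases c5 : G.sign u3 v2
                · exact Or.inr (Or.inr (Or.inr (Or.inr ⟨u3, u2, u1, v3, v2, v1, (pw6 d6.symm d2.symm d12 d11 d10 d1.symm d9 d8 d7 d5 d4 d3 d15.symm d14.symm d13.symm), a33, a32, a31, a23, a22, a21, a13, a12, a11, (SignedBigraph.not_adj_symm' nu23), (SignedBigraph.not_adj_symm' nu13), (SignedBigraph.not_adj_symm' nu12), (SignedBigraph.not_adj_symm' nv23), (SignedBigraph.not_adj_symm' nv13), (SignedBigraph.not_adj_symm' nv12), sf3, c5, sf2, sf1, c4, c3, c2, c1, c0⟩)))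
                · exact Or.inr (Or.inr (Or.inr (Or.inl ⟨u1, u2, u3, v1, v2, v3, (pw6 d1 d2 d3 d4 d5 d6 d7 d8 d9 d10 d11 d12 d13 d14 d15), a11, a12, a13, a21, a22, a23, a31, a32, a33, nu12, nu13, nu23, nv12, nv13, nv23, sf1, sf2, sf3, c0, c1, c2, c3, c4, c5⟩)))
end

section
/- Let G be a non-separable bigraph with bipartition (X,Y) which has no isolated vertex, and let x_1,…,x_α, y_1,…,y_β be a canonical ordering of G. Then: (1) x_1 is adjacent to all vertices of Y; (2) every vertex of N(y_1) is adjacent to all vertices of Y; (3) for each x_i ∈ N(y_1) the edge x_iy_1 is a simplicial edge (in particular x_1y_1 is simplicial); (4) if x_iy_j is a simplicial edge then the graph obtained from G by deleting the edge x_iy_j is non-separable; (5) if x_iy_j is an edge that is not simplicial, then there exist x_k ∈ N(y_j) with k > i and y_ℓ ∈ N(x_i) with ℓ < j such that x_k and y_ℓ are not adjacent. -/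
universe u

/-- Auxiliary: if `pq` is a simplicial edge, then in the graph with `pq` deleted,
any neighbour of `p` and any neighbour of `q` are adjacent. -/
lemma simplicialEdge_delete_adj {V : Type u} {G : SimpleGraph V} {p q u v : V}
    (hs : SimplicialEdge G p q)
    (hu : (G.deleteEdges {s(p, q)}).Adj p u)
    (hv : (G.deleteEdges {s(p, q)}).Adj q v) :
    (G.deleteEdges {s(p, q)}).Adj u v := by
  rw [SimpleGraph.deleteEdges_adj] at hu hv ⊢
  obtain ⟨hpu, hu2⟩ := hu
  obtain ⟨hqv, hv2⟩ := hv
  have huq : u ≠ q := by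
    rintro rfl; exact hu2 rfl
  have hvp : v ≠ p := by
    rintro rfl; exact hv2 (by rw [Set.mem_singleton_iff, Sym2.eq_swap])
  have hadj : G.Adj u v := hs.2 u ⟨hpu, huq⟩ v ⟨hqv, hvp⟩
  refine ⟨hadj, ?_⟩
  intro hmem
  rw [Set.mem_singleton_iff, Sym2.eq_iff] at hmem
  rcases hmem with ⟨h1, _⟩ | ⟨h1, _⟩
  · subst h1; exact G.loopless.irrefl _ hpu
  · exact huq h1

/-- Lemma 3.1: basic properties of a canonical ordering of a
non-separable bigraph without isolated vertices. -/
theorem canonicalOrdering_properties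
    {V : Type u} (G : SimpleGraph V) (side : V → Bool)
    (hbip : ∀ ⦃a b : V⦄, G.Adj a b → side a ≠ side b)
    (hns : ¬ IsSeparableGraph G)
    (hiso : ∀ v : V, ∃ w : V, G.Adj v w)
    {α β : ℕ} (x : Fin α → V) (y : Fin β → V)
    (hcan : IsCanonicalOrdering G side x y) :
    -- (1) x₁ is adjacent to all vertices in Y
    (∀ (hα : 0 < α) (j : Fin β), G.Adj (x ⟨0, hα⟩) (y j)) ∧
    -- (2) each vertex in N(y₁) is adjacent to all vertices of Y
    (∀ (hβ : 0 < β) (v : V), G.Adj v (y ⟨0, hβ⟩) → ∀ j : Fin β, G.Adj v (y j)) ∧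
    -- (3) for each xᵢ ∈ N(y₁), xᵢy₁ is a simplicial edge
    (∀ (hβ : 0 < β) (i : Fin α), G.Adj (x i) (y ⟨0, hβ⟩) →
      SimplicialEdge G (x i) (y ⟨0, hβ⟩)) ∧
    -- (4) deleting a simplicial edge keeps the graph non-separable
    (∀ (i : Fin α) (j : Fin β), SimplicialEdge G (x i) (y j) →
      ¬ IsSeparableGraph (G.deleteEdges {s(x i, y j)})) ∧
    -- (5) a non-simplicial edge xᵢyⱼ yields xₖ ∈ N(yⱼ), k > i, and yₗ ∈ N(xᵢ),
    -- ℓ < j, with xₖ, yₗ non-adjacent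
    (∀ (i : Fin α) (j : Fin β), G.Adj (x i) (y j) →
      ¬ SimplicialEdge G (x i) (y j) →
      ∃ (k : Fin α) (l : Fin β), i < k ∧ l < j ∧
        G.Adj (x k) (y j) ∧ G.Adj (x i) (y l) ∧ ¬ G.Adj (x k) (y l)) := by
  obtain ⟨hxinj, hyinj, hX, hY, hxmono, hymono⟩ := hcan
  have hsideX : ∀ i : Fin α, side (x i) = true := fun i => (hX (x i)).2 ⟨i, rfl⟩
  have hsideY : ∀ j : Fin β, side (y j) = false := fun j => (hY (y j)).2 ⟨j, rfl⟩
  have toY : ∀ (i' : Fin α) (w : V), G.Adj (x i') w → ∃ l, y l = w := by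
    intro i' w hw
    have h := hbip hw
    rw [hsideX] at h
    have hwf : side w = false := by
      rcases Bool.eq_false_or_eq_true (side w) with h' | h'
      · exact absurd h'.symm h
      · exact h'
    exact (hY w).1 hwf
  have toX : ∀ (j' : Fin β) (w : V), G.Adj (y j') w → ∃ k, x k = w := by
    intro j' w hw
    have h := hbip hw
    rw [hsideY] at h
    have hwt : side w = true := by
      rcases Bool.eq_false_or_eq_true (side w) with h' | h'
      · exact h'
      · exact absurd h'.symm h
    exact (hX w).1 hwt
  -- Part (1)
  have part1 : ∀ (hα : 0 < α) (j : Fin β), G.Adj (x ⟨0, hα⟩) (y j) := by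
    intro hα j
    obtain ⟨w, hw⟩ := hiso (y j)
    obtain ⟨m, rfl⟩ := toX j w hw
    exact hxmono ⟨0, hα⟩ m (Nat.zero_le _) hw.symm
  -- Part (2)
  have part2 : ∀ (hβ : 0 < β) (v : V), G.Adj v (y ⟨0, hβ⟩) → ∀ j : Fin β, G.Adj v (y j) := by
    intro hβ v hv j
    exact (hymono ⟨0, hβ⟩ j (Nat.zero_le _) hv.symm).symm
  -- Part (3)
  have part3 : ∀ (hβ : 0 < β) (i : Fin α), G.Adj (x i) (y ⟨0, hβ⟩) →
      SimplicialEdge G (x i) (y ⟨0, hβ⟩) := by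
    intro hβ i hadj
    refine ⟨hadj, ?_⟩
    rintro c ⟨hc, -⟩ d ⟨hd, -⟩
    obtain ⟨l, rfl⟩ := toY i c hc
    obtain ⟨m, rfl⟩ := toX ⟨0, hβ⟩ d hd
    exact hymono ⟨0, hβ⟩ l (Nat.zero_le _) hd
  refine ⟨part1, part2, part3, ?_, ?_⟩
  -- Part (4)
  · intro i j hs hsep
    obtain ⟨a, b, c, d, hpw, hab, hcd, hac, had, hbc, hbd⟩ := hsep
    have hGab := (SimpleGraph.deleteEdges_adj.mp hab).1
    have hGcd := (SimpleGraph.deleteEdges_adj.mp hcd).1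
    have handle : ∀ u w u' w' : V,
        (G.deleteEdges {s(x i, y j)}).Adj u u' →
        (G.deleteEdges {s(x i, y j)}).Adj w w' →
        ¬ (G.deleteEdges {s(x i, y j)}).Adj u w →
        ¬ (G.deleteEdges {s(x i, y j)}).Adj u' w' →
        G.Adj u w → False := by
      intro u w u' w' huu' hww' huw huw' hG
      have hne : s(u, w) ∈ ({s(x i, y j)} : Set (Sym2 V)) := by
        by_contra hm
        exact huw (SimpleGraph.deleteEdges_adj.mpr ⟨hG, hm⟩)
      rw [Set.mem_singleton_iff, Sym2.eq_iff] at hne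
      rcases hne with ⟨rfl, rfl⟩ | ⟨rfl, rfl⟩
      · exact huw' (simplicialEdge_delete_adj hs huu' hww')
      · exact huw' ((simplicialEdge_delete_adj hs hww' huu').symm)
    by_cases h1 : G.Adj a c
    · exact handle a c b d hab hcd hac hbd h1
    by_cases h2 : G.Adj a d
    · exact handle a d b c hab hcd.symm had hbc h2
    by_cases h3 : G.Adj b c
    · exact handle b c a d hab.symm hcd hbc had h3
    by_cases h4 : G.Adj b d
    · exact handle b d a c hab.symm hcd.symm hbd hac h4
    exact hns ⟨a, b, c, d, hpw, hGab, hGcd, h1, h2, h3, h4⟩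
  -- Part (5)
  · intro i j hadj hnsimp
    rw [SimplicialEdge] at hnsimp
    push_neg at hnsimp
    obtain ⟨c, ⟨hc1, hc2⟩, d, ⟨hd1, hd2⟩, hcd⟩ := hnsimp hadj
    obtain ⟨l, rfl⟩ := toY i c hc1
    obtain ⟨k, rfl⟩ := toX j d hd1
    have hik : i < k := by
      by_contra h
      push_neg at h
      exact hcd (hxmono k i h hc1).symm
    have hlj : l < j := by
      by_contra h
      push_neg at h
      exact hcd (hymono j l h hd1)
    exact ⟨k, l, hik, hlj, hd1.symm, hc1, fun h => hcd h.symm⟩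
end
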